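/- arXiv:0902.4380 — 6 statements merged into one kernel-verified Lean document; each statement's English description precedes it below -/
import Mathlib

section
/- For every f ∈ H and every m ≥ 1 there exists a real polynomial q of degree at most m−1 such that ‖P f − K q(K) f‖ ≤ ‖P f − Σ_{i=1}^m ⟨f, φ_i⟩ φ_i‖ = (Σ_{i>m} ⟨f, φ_i⟩²)^{1/2}; that is, the m-th conjugate-gradient (population kernel PLS) approximation is at least as close to P f as the projection of f onto the first m principal components of K. -/
open scoped RealInnerProductSpace

-- aux 1: powers on eigenvector
lemma pow_eigen {H : Type*} [NormedAddCommGroup H] [InnerProductSpace ℝ H]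
    (K : H →L[ℝ] H) {v : H} {μ : ℝ} (h : K v = μ • v) (n : ℕ) :
    (K ^ n) v = μ ^ n • v := by
  induction n with
  | zero => simp
  | succ n ih =>
      rw [pow_succ, ContinuousLinearMap.mul_apply, h, map_smul, ih, smul_smul, pow_succ]
      ring_nf

-- aux 2: aeval on eigenvector
lemma aeval_eigen {H : Type*} [NormedAddCommGroup H] [InnerProductSpace ℝ H]
    (K : H →L[ℝ] H) {v : H} {μ : ℝ} (h : K v = μ • v) (q : Polynomial ℝ) :
    Polynomial.aeval K q v = Polynomial.eval μ q • v := by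
  induction q using Polynomial.induction_on' with
  | add p q hp hq => simp [hp, hq, add_smul]
  | monomial n a =>
      simp only [Polynomial.aeval_monomial, Polynomial.eval_monomial]
      rw [ContinuousLinearMap.mul_apply]
      rw [pow_eigen K h n]
      simp [Algebra.algebraMap_eq_smul_one, smul_smul, mul_comm]

-- aux 3: HasSum of squares of coefficients
lemma hasSum_sq_of_orthonormal {H : Type*} [NormedAddCommGroup H] [InnerProductSpace ℝ H]
    {φ : ℕ → H} (hON : Orthonormal ℝ φ) {a : ℕ → ℝ} {y : H}
    (hy : HasSum (fun i => a i • φ i) y) :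
    HasSum (fun i => a i ^ 2) (‖y‖ ^ 2) := by
  have h2 : Filter.Tendsto (fun s : Finset ℕ => ‖∑ i ∈ s, a i • φ i‖ ^ 2)
      Filter.atTop (nhds (‖y‖ ^ 2)) :=
    ((continuous_norm.pow 2).continuousAt.tendsto.comp hy)
  have h3 : ∀ s : Finset ℕ, ‖∑ i ∈ s, a i • φ i‖ ^ 2 = ∑ i ∈ s, a i ^ 2 := by
    intro s
    rw [← real_inner_self_eq_norm_sq, hON.inner_sum a a s]
    simp [sq]
  rw [HasSum]
  convert h2 using 1
  ext s
  rw [h3]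
  rfl


set_option maxHeartbeats 1000000 in

/-- For every `f ∈ H` and every `m ≥ 1` there is a real polynomial `q` of degree at most
`m − 1` with `‖P f − K q(K) f‖ ≤ ‖P f − Σ_{i<m} ⟨f, φ_i⟩ φ_i‖ = (Σ_{i≥m} ⟨f, φ_i⟩²)^{1/2}`:
the `m`-th conjugate-gradient (population kernel PLS) approximation is at least as close to
`P f` as the projection of `f` onto the first `m` principal components of `K`. -/
theorem stmt2
    {H : Type*} [NormedAddCommGroup H] [InnerProductSpace ℝ H] [CompleteSpace H]
    [SecondCountableTopology H]
    (K : H →L[ℝ] H) (hKsa : IsSelfAdjoint K) (hKpos : ∀ x, 0 ≤ ⟪K x, x⟫)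
    (V : Submodule ℝ H) (hV : V = (LinearMap.range (K : H →ₗ[ℝ] H)).topologicalClosure) [CompleteSpace V]
    (φ : ℕ → H) (hON : Orthonormal ℝ φ)
    (hspan : (Submodule.span ℝ (Set.range φ)).topologicalClosure = V)
    (lam : ℕ → ℝ) (heig : ∀ i, K (φ i) = lam i • φ i)
    (hdec : ∀ i j, i ≤ j → lam j ≤ lam i) (hpos : ∀ i, 0 < lam i)
    (f : H) (m : ℕ) (hm : 1 ≤ m) :
    ∃ q : Polynomial ℝ, q.degree ≤ (m - 1 : ℕ) ∧
      ‖(Submodule.orthogonalProjectionOnto V f : H) - K (Polynomial.aeval K q f)‖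
          ≤ ‖(Submodule.orthogonalProjectionOnto V f : H) - ∑ i ∈ Finset.range m, ⟪f, φ i⟫ • φ i‖ ∧
        ‖(Submodule.orthogonalProjectionOnto V f : H) - ∑ i ∈ Finset.range m, ⟪f, φ i⟫ • φ i‖
          = Real.sqrt (∑' i : ℕ, ⟪f, φ (m + i)⟫ ^ 2) := by
  classical
  set x : H := (Submodule.orthogonalProjectionOnto V f : H) with hxdef
  set c : ℕ → ℝ := fun i => ⟪f, φ i⟫ with hcdef
  -- φ i ∈ V
  have hmem : ∀ i, φ i ∈ V := fun i => by
    rw [← hspan]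
    exact Submodule.le_topologicalClosure _ (Submodule.subset_span (Set.mem_range_self i))
  set ψ : ℕ → V := fun i => ⟨φ i, hmem i⟩ with hψdef
  have hONψ : Orthonormal ℝ ψ := by
    rw [orthonormal_iff_ite] at hON ⊢
    intro i j
    simpa [Submodule.coe_inner, hψdef] using hON i j
  have hbot : (Submodule.span ℝ (Set.range ψ))ᗮ = ⊥ := by
    rw [Submodule.eq_bot_iff]
    intro z hz
    have hzφ : ∀ i, ⟪φ i, (z : H)⟫ = 0 := fun i => by
      have h1 := Submodule.inner_right_of_mem_orthogonal
        (Submodule.subset_span (Set.mem_range_self i)) hz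
      simpa [Submodule.coe_inner, hψdef] using h1
    have hspanφ : (z : H) ∈ (Submodule.span ℝ (Set.range φ))ᗮ := by
      rw [Submodule.mem_orthogonal]
      intro u hu
      induction hu using Submodule.span_induction with
      | mem u hu => obtain ⟨i, rfl⟩ := hu; exact hzφ i
      | zero => simp
      | add u v _ _ hu hv => rw [inner_add_left, hu, hv, add_zero]
      | smul a u _ hu => rw [inner_smul_left, hu, mul_zero]
    have hVo : (z : H) ∈ Vᗮ := by
      have h2 : Vᗮ = (Submodule.span ℝ (Set.range φ))ᗮ := by
        conv_lhs => rw [← hspan]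
        rw [← Submodule.orthogonal_orthogonal_eq_closure,
          Submodule.triorthogonal_eq_orthogonal]
      rw [h2]
      exact hspanφ
    have hz0 : (z : H) = 0 :=
      inner_self_eq_zero.mp (Submodule.inner_right_of_mem_orthogonal z.2 hVo)
    exact Subtype.ext hz0
  set b : HilbertBasis ℕ ℝ V := HilbertBasis.mkOfOrthogonalEqBot hONψ hbot with hbdef
  have hbψ : ⇑b = ψ := HilbertBasis.coe_mkOfOrthogonalEqBot hONψ hbot
  have hx : HasSum (fun i => c i • φ i) x := by
    have h1 := (b.hasSum_orthogonalProjectionOnto f).mapL V.subtypeL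
    rw [hbψ] at h1
    simp only [map_smul, Submodule.subtypeL_apply] at h1
    exact (by simpa [hψdef, hcdef, real_inner_comm] using h1 : HasSum _ (V.starProjection f))
  -- partial sum has-sum facts
  have hg : HasSum (fun i => if i < m then c i • φ i else 0)
      (∑ i ∈ Finset.range m, c i • φ i) := by
    have h1 : ∀ i ∉ Finset.range m, (if i < m then c i • φ i else 0) = 0 := by
      intro i hi
      simp only [Finset.mem_range] at hi
      simp [hi]
    have h2 := hasSum_sum_of_ne_finset_zero (L := SummationFilter.unconditional ℕ) h1
    convert h2 using 1
    refine (Finset.sum_congr rfl fun i hi => ?_).symm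
    simp only [Finset.mem_range] at hi
    simp [hi]
  set a2 : ℕ → ℝ := fun i => if i < m then 0 else c i with ha2def
  have h2 : HasSum (fun i => a2 i • φ i) (x - ∑ i ∈ Finset.range m, c i • φ i) := by
    have := hx.sub hg
    convert this using 1
    funext i
    by_cases h : i < m <;> simp [ha2def, h]
  have h3 := hasSum_sq_of_orthonormal hON h2
  have h4 : HasSum (fun i => c (m + i) ^ 2)
      (‖x - ∑ i ∈ Finset.range m, c i • φ i‖ ^ 2) := by
    have h5 : HasSum (fun i : ℕ => a2 i ^ 2)
        ((‖x - ∑ i ∈ Finset.range m, c i • φ i‖ ^ 2) + ∑ i ∈ Finset.range m, a2 i ^ 2) := by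
      have : ∑ i ∈ Finset.range m, a2 i ^ 2 = 0 := by
        refine Finset.sum_eq_zero fun i hi => ?_
        simp only [Finset.mem_range] at hi
        simp [ha2def, hi]
      rw [this, add_zero]
      exact h3
    have h6 := (hasSum_nat_add_iff (f := fun i : ℕ => a2 i ^ 2) m).mpr h5
    convert h6 using 1
    rfl
    funext i
    have : ¬ i + m < m := by omega
    simp [ha2def, this, Nat.add_comm]
  -- equality part
  have heq : ‖x - ∑ i ∈ Finset.range m, c i • φ i‖
      = Real.sqrt (∑' i : ℕ, c (m + i) ^ 2) := by
    rw [h4.tsum_eq, Real.sqrt_sq (norm_nonneg _)]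
  -- polynomial construction
  set S : Finset ℝ := (Finset.range m).image lam with hSdef
  set p : Polynomial ℝ := ∏ μ ∈ S, (1 - Polynomial.C μ⁻¹ * Polynomial.X) with hpdef
  set q : Polynomial ℝ := -p.divX with hqdef
  have hpeval : ∀ t : ℝ, p.eval t = ∏ μ ∈ S, (1 - μ⁻¹ * t) := by
    intro t
    simp [hpdef, Polynomial.eval_prod]
  have hp0 : p.coeff 0 = 1 := by
    rw [Polynomial.coeff_zero_eq_eval_zero, hpeval 0]
    simp
  have hqeval : ∀ t : ℝ, t * q.eval t = 1 - p.eval t := by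
    intro t
    have h1 := congrArg (Polynomial.eval t) (Polynomial.X_mul_divX_add p)
    simp only [Polynomial.eval_add, Polynomial.eval_mul, Polynomial.eval_X,
      Polynomial.eval_C, hp0] at h1
    simp only [hqdef, Polynomial.eval_neg]
    linarith
  have hr0 : ∀ i, i < m → Polynomial.eval (lam i) p = 0 := by
    intro i hi
    rw [hpeval]
    refine Finset.prod_eq_zero (Finset.mem_image_of_mem lam (Finset.mem_range.mpr hi)) ?_
    rw [inv_mul_cancel₀ (hpos i).ne']
    ring
  have hr1 : ∀ i, m ≤ i → 0 ≤ Polynomial.eval (lam i) p ∧ Polynomial.eval (lam i) p ≤ 1 := by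
    intro i hi
    have hfac : ∀ μ ∈ S, 0 ≤ 1 - μ⁻¹ * lam i ∧ 1 - μ⁻¹ * lam i ≤ 1 := by
      intro μ hμ
      rw [hSdef, Finset.mem_image] at hμ
      obtain ⟨j, hj, rfl⟩ := hμ
      rw [Finset.mem_range] at hj
      have hji : j ≤ i := le_trans (Nat.le_of_lt_succ (Nat.lt_succ_of_lt hj)) hi
      have hle : lam i ≤ lam j := hdec j i hji
      have hj0 : 0 < lam j := hpos j
      constructor
      · have : (lam j)⁻¹ * lam i ≤ 1 := by
          rw [inv_mul_le_iff₀ hj0]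
          simpa using hle
        linarith
      · have : 0 ≤ (lam j)⁻¹ * lam i := mul_nonneg (inv_nonneg.mpr hj0.le) (hpos i).le
        linarith
    rw [hpeval]
    exact ⟨Finset.prod_nonneg fun μ hμ => (hfac μ hμ).1,
      Finset.prod_le_one (fun μ hμ => (hfac μ hμ).1) (fun μ hμ => (hfac μ hμ).2)⟩
  have hpne : p ≠ 0 := by
    intro h
    rw [h] at hp0
    simp at hp0
  have hdegp : p.degree ≤ (m : WithBot ℕ) := by
    calc p.degree ≤ ∑ μ ∈ S, (1 - Polynomial.C μ⁻¹ * Polynomial.X).degree :=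
          Polynomial.degree_prod_le _ _
      _ ≤ ∑ _μ ∈ S, (1 : WithBot ℕ) := by
          refine Finset.sum_le_sum fun μ _ => ?_
          refine le_trans (Polynomial.degree_sub_le _ _) ?_
          simp only [max_le_iff]
          exact ⟨le_trans Polynomial.degree_one_le (by norm_num),
            Polynomial.degree_C_mul_X_le _⟩
      _ = (S.card : WithBot ℕ) := by
          rw [Finset.sum_const, nsmul_eq_mul, mul_one]
      _ ≤ (m : WithBot ℕ) := by
          have : S.card ≤ m := le_trans (Finset.card_image_le) (by simp)
          exact_mod_cast this
  have hqdeg : q.degree ≤ ((m - 1 : ℕ) : WithBot ℕ) := by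
    by_cases hq0 : q = 0
    · rw [hq0, Polynomial.degree_zero]; exact bot_le
    · have hlt : q.degree < (m : WithBot ℕ) :=
        lt_of_lt_of_le (by rw [hqdef, Polynomial.degree_neg]; exact Polynomial.degree_divX_lt hpne)
          hdegp
      have := (Polynomial.natDegree_lt_iff_degree_lt hq0).mpr hlt
      exact Polynomial.degree_le_of_natDegree_le (by omega)
  -- K (aeval K q f) = K (aeval K q x)
  have hrange : LinearMap.range (K : H →ₗ[ℝ] H) ≤ V := hV ▸ Submodule.le_topologicalClosure _
  have hw : f - x ∈ Vᗮ := V.sub_starProjection_mem_orthogonal f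
  have hKw : K (f - x) = 0 := by
    have hsym := hKsa.isSymmetric
    have h0 : ⟪K (f - x), K (f - x)⟫ = 0 := by
      have h1 : ⟪K (f - x), K (f - x)⟫ = ⟪f - x, K (K (f - x))⟫ := hsym (f - x) (K (f - x))
      rw [h1]
      exact Submodule.inner_left_of_mem_orthogonal (hrange ⟨_, rfl⟩) hw
    exact inner_self_eq_zero.mp h0
  have hcomm : K * Polynomial.aeval K q = Polynomial.aeval K q * K := by
    have h1 : Polynomial.aeval K (Polynomial.X * q) = K * Polynomial.aeval K q := by
      rw [map_mul, Polynomial.aeval_X]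
    have h2 : Polynomial.aeval K (q * Polynomial.X) = Polynomial.aeval K q * K := by
      rw [map_mul, Polynomial.aeval_X]
    rw [← h1, ← h2, mul_comm]
  have hKq : K (Polynomial.aeval K q f) = K (Polynomial.aeval K q x) := by
    have hfx : f = x + (f - x) := by abel
    conv_lhs => rw [hfx]
    rw [map_add, map_add]
    have : K (Polynomial.aeval K q (f - x)) = 0 := by
      have := congrFun (congrArg DFunLike.coe hcomm) (f - x)
      simp only [ContinuousLinearMap.mul_apply] at this
      rw [← ContinuousLinearMap.comp_apply]
      calc K ((Polynomial.aeval K q) (f - x)) = (Polynomial.aeval K q) (K (f - x)) := this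
        _ = 0 := by rw [hKw, map_zero]
    rw [this, add_zero]
  -- the approximation has-sum
  set T : H →L[ℝ] H := K.comp (Polynomial.aeval K q) with hTdef
  have hTφ : ∀ i, T (φ i) = (lam i * Polynomial.eval (lam i) q) • φ i := by
    intro i
    rw [hTdef, ContinuousLinearMap.comp_apply, aeval_eigen K (heig i) q, map_smul, heig i,
      smul_smul, mul_comm]
  have h5 : HasSum (fun i => (Polynomial.eval (lam i) p * c i) • φ i)
      (x - K (Polynomial.aeval K q x)) := by
    have h6 := hx.mapL T
    have h7 : HasSum (fun i => (lam i * Polynomial.eval (lam i) q * c i) • φ i)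
        (K (Polynomial.aeval K q x)) := by
      convert h6 using 1
      funext i
      rw [map_smul, hTφ i, smul_smul, mul_comm (c i)]
      rfl
    have := hx.sub h7
    convert this using 1
    funext i
    rw [← sub_smul]
    congr 1
    linear_combination c i * hqeval (lam i)
  have h6 := hasSum_sq_of_orthonormal hON h5
  have hle : ∀ i, (Polynomial.eval (lam i) p * c i) ^ 2 ≤ a2 i ^ 2 := by
    intro i
    by_cases h : i < m
    · simp [hr0 i h, ha2def, h]
    · push_neg at h
      have ⟨hp1, hp2⟩ := hr1 i h
      have : a2 i = c i := by simp [ha2def, not_lt.mpr h]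
      rw [this, mul_pow]
      have hps : Polynomial.eval (lam i) p ^ 2 ≤ 1 := by nlinarith
      nlinarith [sq_nonneg (c i)]
  have hineq : ‖x - K (Polynomial.aeval K q f)‖
      ≤ ‖x - ∑ i ∈ Finset.range m, c i • φ i‖ := by
    rw [hKq]
    have hsq : ‖x - K (Polynomial.aeval K q x)‖ ^ 2
        ≤ ‖x - ∑ i ∈ Finset.range m, c i • φ i‖ ^ 2 := hasSum_le hle h6 h3
    have := Real.sqrt_le_sqrt hsq
    rwa [Real.sqrt_sq (norm_nonneg _), Real.sqrt_sq (norm_nonneg _)] at this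
  exact ⟨q, hqdeg, hineq, heq⟩
end

section
/- For every f ∈ H, the infimum over real polynomials q of degree at most m−1 of ‖P f − K q(K) f‖ tends to 0 as m → ∞; in particular the population kernel PLS approximations K q_m(K) f converge to P f in H. -/
open scoped RealInnerProductSpace

open Polynomial Filter

/-- For every `f ∈ H`, the infimum over real polynomials `q` of degree at most `m − 1` of
`‖P f − K q(K) f‖` tends to `0` as `m → ∞`: the population kernel PLS approximations
`K q_m(K) f` converge to `P f` in `H`. -/
theorem stmt3
    {H : Type*} [NormedAddCommGroup H] [InnerProductSpace ℝ H] [CompleteSpace H]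
    [SecondCountableTopology H]
    (K : H →L[ℝ] H) (hKsa : IsSelfAdjoint K) (hKpos : ∀ x, 0 ≤ ⟪K x, x⟫)
    (V : Submodule ℝ H) (hV : V = (LinearMap.range (K : H →ₗ[ℝ] H)).topologicalClosure) [CompleteSpace V]
    (φ : ℕ → H) (hON : Orthonormal ℝ φ)
    (hspan : (Submodule.span ℝ (Set.range φ)).topologicalClosure = V)
    (lam : ℕ → ℝ) (heig : ∀ i, K (φ i) = lam i • φ i)
    (hdec : ∀ i j, i ≤ j → lam j ≤ lam i) (hpos : ∀ i, 0 < lam i)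
    (f : H) :
    Filter.Tendsto
      (fun m : ℕ =>
        sInf {r : ℝ | ∃ q : Polynomial ℝ, q.degree < (m : WithBot ℕ) ∧
          r = ‖(V.orthogonalProjectionOnto f : H) - K (Polynomial.aeval K q f)‖})
      Filter.atTop (nhds 0) := by
  have hsym : ∀ x y : H, ⟪K x, y⟫ = ⟪x, K y⟫ := fun x y => hKsa.isSymmetric x y
  set g : H := (V.orthogonalProjectionOnto f : H) with hgdef
  have hVclosed : IsClosed (V : Set H) := by
    rw [hV]; exact Submodule.isClosed_topologicalClosure _
  have hrange : ∀ x : H, K x ∈ V := fun x => by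
    rw [hV]; exact Submodule.le_topologicalClosure _ ⟨x, rfl⟩
  -- K kills f - g
  have hKfg : K (f - g) = 0 := by
    have horth : f - g ∈ Vᗮ := Submodule.sub_starProjection_mem_orthogonal (K := V) f
    have h0 : ⟪K (f - g), K (f - g)⟫ = 0 := by
      rw [hsym, real_inner_comm]
      exact horth _ (hrange _)
    exact inner_self_eq_zero.mp h0
  have hKpow : ∀ n : ℕ, (K ^ (n + 1)) f = (K ^ (n + 1)) g := by
    intro n
    have h1 : (K ^ (n + 1)) (f - g) = 0 := by
      rw [pow_succ, ContinuousLinearMap.mul_apply, hKfg, map_zero]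
    rw [map_sub] at h1
    exact sub_eq_zero.mp h1
  -- the Krylov subspace
  set W : Submodule ℝ H :=
    (Submodule.span ℝ (Set.range fun n : ℕ => (K ^ (n + 1)) g)).topologicalClosure with hWdef
  have hWclosed : IsClosed (W : Set H) := Submodule.isClosed_topologicalClosure _
  haveI : CompleteSpace W := hWclosed.completeSpace_coe
  have hWV : W ≤ V := by
    refine Submodule.topologicalClosure_minimal _ (Submodule.span_le.mpr ?_) hVclosed
    rintro x ⟨n, rfl⟩
    show (K ^ (n + 1)) g ∈ (V : Set H)
    have heq : (K ^ (n + 1)) g = K ((K ^ n) g) := by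
      rw [pow_succ', ContinuousLinearMap.mul_apply]
    rw [heq]
    exact hrange _
  -- W is K-invariant
  have hKW : ∀ x ∈ W, K x ∈ W := by
    intro x hx
    have hcomap : IsClosed ((W.comap (K : H →ₗ[ℝ] H)) : Set H) :=
      hWclosed.preimage K.continuous
    have hle : Submodule.span ℝ (Set.range fun n : ℕ => (K ^ (n + 1)) g) ≤
        W.comap (K : H →ₗ[ℝ] H) := by
      rw [Submodule.span_le]
      rintro y ⟨n, rfl⟩
      have heq : K ((K ^ (n + 1)) g) = (K ^ (n + 1 + 1)) g := by
        conv_rhs => rw [pow_succ', ContinuousLinearMap.mul_apply]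
      simp only [Submodule.mem_comap, ContinuousLinearMap.coe_coe]
      show K ((K ^ (n + 1)) g) ∈ W
      rw [heq]
      exact Submodule.le_topologicalClosure _ (Submodule.subset_span ⟨n + 1, rfl⟩)
    exact Submodule.topologicalClosure_minimal _ hle hcomap hx
  have hKgW : K g ∈ W := by
    have : K g = (K ^ (0 + 1)) g := by rw [pow_one]
    rw [this]
    exact Submodule.le_topologicalClosure _ (Submodule.subset_span ⟨0, rfl⟩)
  -- g belongs to W
  have hgW : g ∈ W := by
    set h : H := g - (W.orthogonalProjectionOnto g : H) with hhdef
    have hhorth : ∀ u ∈ W, ⟪u, h⟫ = 0 := fun u hu =>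
      (Submodule.sub_starProjection_mem_orthogonal (K := W) g) u hu
    have hKhW : K h ∈ W := by
      rw [hhdef, map_sub]
      exact W.sub_mem hKgW (hKW _ (SetLike.coe_mem _))
    have hb : ⟪K h, h⟫ = 0 := hhorth _ hKhW
    -- K h = 0
    have hKh : K h = 0 := by
      have hbnn : (0:ℝ) ≤ ⟪K h, K h⟫ := real_inner_self_nonneg
      have hann : (0:ℝ) ≤ ⟪K (K h), K h⟫ := hKpos (K h)
      have key : ∀ t : ℝ, 0 ≤ 2 * t * ⟪K h, K h⟫ + t ^ 2 * ⟪K (K h), K h⟫ := by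
        intro t
        have h1 := hKpos (h + t • K h)
        have h2 : ⟪K (K h), h⟫ = ⟪K h, K h⟫ := by rw [hsym]
        simp only [map_add, map_smul, inner_add_left, inner_add_right,
          real_inner_smul_left, real_inner_smul_right] at h1
        rw [hb, h2] at h1
        ring_nf at h1 ⊢
        linarith
      have hb0 : ⟪K h, K h⟫ = 0 := by
        by_contra hne
        have hbpos : 0 < ⟪K h, K h⟫ := lt_of_le_of_ne hbnn (Ne.symm hne)
        have hapos : (0:ℝ) < ⟪K (K h), K h⟫ + 1 := by linarith
        set s : ℝ := ⟪K h, K h⟫ / (⟪K (K h), K h⟫ + 1) with hsdef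
        have hspos : 0 < s := div_pos hbpos hapos
        have hs : s * (⟪K (K h), K h⟫ + 1) = ⟪K h, K h⟫ :=
          div_mul_cancel₀ _ (ne_of_gt hapos)
        have hkey := key (-s)
        nlinarith [mul_pos hspos hbpos, mul_pos hspos hspos]
      exact inner_self_eq_zero.mp hb0
    -- h ∈ V
    have hhV : h ∈ V := V.sub_mem (SetLike.coe_mem _) (hWV (SetLike.coe_mem _))
    -- h ⊥ φ i
    have hhphi : ∀ i, ⟪φ i, h⟫ = 0 := by
      intro i
      have h1 : lam i * ⟪φ i, h⟫ = 0 := by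
        calc lam i * ⟪φ i, h⟫ = ⟪lam i • φ i, h⟫ := (real_inner_smul_left _ _ _).symm
          _ = ⟪K (φ i), h⟫ := by rw [heig]
          _ = ⟪φ i, K h⟫ := hsym _ _
          _ = 0 := by rw [hKh, inner_zero_right]
      exact (mul_eq_zero.mp h1).resolve_left (hpos i).ne'
    -- h ⊥ span of φ's, hence h ⊥ V, hence h = 0
    have hspanorth : ∀ u ∈ Submodule.span ℝ (Set.range φ), ⟪u, h⟫ = 0 := by
      intro u hu
      induction hu using Submodule.span_induction with
      | mem x hx => obtain ⟨i, rfl⟩ := hx; exact hhphi i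
      | zero => simp
      | add x y _ _ hx hy => rw [inner_add_left, hx, hy, add_zero]
      | smul c x _ hx => rw [real_inner_smul_left, hx, mul_zero]
    have hh0 : h = 0 := by
      have hcl : h ∈ closure ((Submodule.span ℝ (Set.range φ) : Submodule ℝ H) : Set H) := by
        rw [← hspan] at hhV
        exact hhV
      have hclosedset : IsClosed {x : H | ⟪x, h⟫ = 0} :=
        isClosed_eq (continuous_id.inner continuous_const) continuous_const
      have hsubset : closure ((Submodule.span ℝ (Set.range φ) : Submodule ℝ H) : Set H) ⊆
          {x : H | ⟪x, h⟫ = 0} := closure_minimal hspanorth hclosedset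
      exact inner_self_eq_zero.mp (hsubset hcl)
    have : g = (W.orthogonalProjectionOnto g : H) := by
      have := sub_eq_zero.mp hh0
      exact this
    rw [this]
    exact SetLike.coe_mem _
  -- final convergence argument
  rw [Metric.tendsto_atTop]
  intro ε hε
  have hgcl : g ∈ closure ((Submodule.span ℝ
      (Set.range fun n : ℕ => (K ^ (n + 1)) g) : Submodule ℝ H) : Set H) := hgW
  obtain ⟨w, hwmem, hwdist⟩ := Metric.mem_closure_iff.mp hgcl ε hε
  obtain ⟨c, hc⟩ := Finsupp.mem_span_range_iff_exists_finsupp.mp hwmem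
  set q : ℝ[X] := ∑ n ∈ c.support, C (c n) * X ^ n with hqdef
  have haeval : K ((aeval K q) f) = w := by
    have h1 : (aeval K q) f = ∑ n ∈ c.support, c n • (K ^ n) f := by
      rw [hqdef, map_sum, ContinuousLinearMap.sum_apply]
      refine Finset.sum_congr rfl fun n _ => ?_
      rw [map_mul, aeval_C, aeval_X_pow]
      simp [Algebra.smul_def]
    rw [h1, map_sum]
    rw [← hc, Finsupp.sum]
    refine Finset.sum_congr rfl fun n _ => ?_
    rw [map_smul]
    congr 1
    rw [← ContinuousLinearMap.mul_apply, ← pow_succ']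
    exact hKpow n
  set N : ℕ := q.natDegree + 1 with hNdef
  refine ⟨N, fun m hm => ?_⟩
  set S : Set ℝ := {r : ℝ | ∃ p : Polynomial ℝ, p.degree < (m : WithBot ℕ) ∧
    r = ‖g - K ((aeval K) p f)‖} with hSdef
  have hbdd : BddBelow S := by
    refine ⟨0, fun r hr => ?_⟩
    obtain ⟨p, _, rfl⟩ := hr
    exact norm_nonneg _
  have hqdeg : q.degree < (m : WithBot ℕ) := by
    refine lt_of_le_of_lt q.degree_le_natDegree ?_
    exact_mod_cast Nat.lt_of_lt_of_le (Nat.lt_succ_self _) hm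
  have hmemS : ‖g - w‖ ∈ S := ⟨q, hqdeg, by rw [haeval]⟩
  have hinf_le : sInf S ≤ ‖g - w‖ := csInf_le hbdd hmemS
  have hinf_nonneg : 0 ≤ sInf S := by
    refine Real.sInf_nonneg fun r hr => ?_
    obtain ⟨p, _, rfl⟩ := hr
    exact norm_nonneg _
  have : ‖g - w‖ < ε := by rwa [← dist_eq_norm]
  rw [Real.dist_0_eq_abs, abs_of_nonneg hinf_nonneg]
  exact lt_of_le_of_lt hinf_le this
end

section
/- Let H be a real separable Hilbert space, n ≥ 2, and X_1, …, X_n independent identically distributed H-valued (Bochner integrable) random variables with ‖X_i‖ ≤ 1 almost surely. Set ε_n = 4 √((log n)/n). Then with probability at least 1 − n⁻² one has ‖(1/n) Σ_{i=1}^n X_i − E[X_1]‖ ≤ ε_n. -/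
open MeasureTheory ProbabilityTheory

open Real

section Helpers

local notation "⟪" x ", " y "⟫" => @inner ℝ _ _ x y

variable {H : Type*} [NormedAddCommGroup H] [InnerProductSpace ℝ H] [CompleteSpace H]
  [SecondCountableTopology H] [MeasurableSpace H] [BorelSpace H]

lemma expq {x : ℝ} (hx : x ≤ 6/5) : Real.exp x ≤ 1 + x + (163/200) * x^2 := by
  rcases le_or_gt x (-1) with h | h
  · have h1 : Real.exp x ≤ Real.exp (-1) := Real.exp_le_exp.2 h
    have h2 : Real.exp (-1) ≤ 0.37 := by
      rw [Real.exp_neg]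
      rw [inv_le_iff_one_le_mul₀ (Real.exp_pos 1)]
      nlinarith [Real.exp_one_gt_d9]
    nlinarith
  rcases le_or_gt x 0 with h0 | h0
  · have hb := Real.exp_bound (x := x) (by rw [abs_le]; constructor <;> linarith) (n := 3) (by norm_num)
    rw [abs_le] at hb
    norm_num [Finset.sum_range_succ, Nat.factorial] at hb
    have habs : |x|^3 = -x^3 := by rw [abs_of_nonpos h0]; ring
    nlinarith [sq_nonneg x, hb.2, sq_nonneg (1+x)]
  · set t := x/2 with ht
    have ht0 : 0 ≤ t := by positivity
    have ht1 : t ≤ 3/5 := by rw [ht]; linarith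
    have hb := Real.exp_bound (x := t) (by rw [abs_le]; constructor <;> linarith) (n := 3) (by norm_num)
    rw [abs_le] at hb
    norm_num [Finset.sum_range_succ, Nat.factorial] at hb
    have habs : |t|^3 = t^3 := by rw [abs_of_nonneg ht0]
    have key : Real.exp t ≤ 1 + t + t^2/2 + (2/9)*t^3 := by nlinarith [hb.2]
    have hsq : Real.exp x = (Real.exp t)^2 := by
      rw [← Real.exp_nat_mul]; congr 1; push_cast; rw [ht]; ring
    have hx2 : x = 2*t := by rw [ht]; ring
    rw [hsq, hx2]
    have hpos : 0 < Real.exp t := Real.exp_pos t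
    nlinarith [key, ht0, ht1, sq_nonneg t, pow_le_pow_left₀ ht0 ht1 3, pow_le_pow_left₀ ht0 ht1 4]

set_option maxHeartbeats 1000000 in
lemma inner_step (ν : Measure H) [IsProbabilityMeasure ν]
    (hb : ∀ᵐ z ∂ν, ‖z‖ ≤ 2) (hm : ∫ z, z ∂ν = 0) (hv : ∫ z, ‖z‖^2 ∂ν ≤ 1)
    (s : H) {l : ℝ} (hl : 0 ≤ l) (hsmall : 4*l*(‖s‖+1) ≤ 6/5) :
    ∫ z, exp (l * ‖s + z‖^2) ∂ν ≤ exp ((l + (17/4)*l^2)*‖s‖^2 + (l + 15*l^2)) := by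
  set σ : ℝ := ‖s‖ + 1 with hσ
  have hσ1 : 1 ≤ σ := by rw [hσ]; linarith [norm_nonneg s]
  set W : H → ℝ := fun z => 2*⟪s, z⟫ + ‖z‖^2 with hW
  have hWmeas : Measurable W := by
    apply Measurable.add
    · exact (measurable_const.mul ((continuous_const.inner continuous_id).measurable))
    · exact (measurable_norm.pow_const 2)
  have hWb : ∀ᵐ z ∂ν, W z ≤ 2*σ*‖z‖ ∧ -(2*σ*‖z‖) ≤ W z := by
    filter_upwards [hb] with z hz
    have h1 : ⟪s, z⟫ ≤ ‖s‖*‖z‖ := real_inner_le_norm s z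
    have h2 : -(‖s‖*‖z‖) ≤ ⟪s, z⟫ := neg_le_of_abs_le (abs_real_inner_le_norm s z)
    have h3 : ‖z‖^2 ≤ 2*‖z‖ := by nlinarith [norm_nonneg z]
    have h4 : (0:ℝ) ≤ ‖z‖^2 := by positivity
    constructor <;> simp only [hW] <;> nlinarith [norm_nonneg z, norm_nonneg s]
  have h2σ : ∀ᵐ z ∂ν, 2*σ*‖z‖ ≤ 4*σ := by
    filter_upwards [hb] with z hz
    nlinarith [mul_le_mul_of_nonneg_left hz (by linarith : (0:ℝ) ≤ 2*σ)]
  have hWexp : ∀ᵐ z ∂ν, exp (l * W z) ≤ 1 + l * W z + ((163/200)*l^2*(4*σ^2))*‖z‖^2 := by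
    filter_upwards [hWb, h2σ] with z ⟨hub, hlb⟩ h4σ
    have hx : l * W z ≤ 6/5 := by
      calc l * W z ≤ l * (4*σ) := by nlinarith [mul_le_mul_of_nonneg_left (hub.trans h4σ) hl]
        _ ≤ 6/5 := by linarith [hsmall]
    have h2' : (163/200)*(l * W z)^2 ≤ ((163/200)*l^2*(4*σ^2))*‖z‖^2 := by
      have hsq : (W z)^2 ≤ (2*σ*‖z‖)^2 := sq_le_sq' hlb hub
      have hmul : l^2 * (W z)^2 ≤ l^2 * (2*σ*‖z‖)^2 :=
        mul_le_mul_of_nonneg_left hsq (sq_nonneg l)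
      ring_nf
      ring_nf at hmul
      linarith
    calc exp (l * W z) ≤ 1 + l*W z + (163/200)*(l*W z)^2 := expq hx
      _ ≤ _ := by linarith
  have hintW : Integrable W ν := by
    apply (integrable_const (4*σ)).mono' hWmeas.aestronglyMeasurable
    filter_upwards [hWb, h2σ] with z ⟨h1, h2⟩ h4σ
    rw [Real.norm_eq_abs, abs_le]
    constructor <;> nlinarith
  have hintnz : Integrable (fun z : H => ‖z‖^2) ν := by
    apply (integrable_const (4:ℝ)).mono' (measurable_norm.pow_const 2).aestronglyMeasurable
    filter_upwards [hb] with z hz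
    rw [Real.norm_eq_abs, abs_le]; constructor <;> nlinarith [norm_nonneg z]
  have hintexp : Integrable (fun z => exp (l * W z)) ν := by
    apply (integrable_const (exp (6/5))).mono'
      ((hWmeas.const_mul l).exp.aestronglyMeasurable)
    filter_upwards [hWb, h2σ] with z ⟨hub, hlb⟩ h4σ
    rw [Real.norm_eq_abs, abs_of_pos (exp_pos _)]
    apply exp_le_exp.2
    calc l * W z ≤ l * (4*σ) := by nlinarith [mul_le_mul_of_nonneg_left (hub.trans h4σ) hl]
      _ ≤ 6/5 := by linarith [hsmall]
  have hintid : Integrable (fun z : H => z) ν := by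
    apply (integrable_const (2:ℝ)).mono' measurable_id.aestronglyMeasurable
    filter_upwards [hb] with z hz; simpa using hz
  have hintWval : ∫ z, W z ∂ν = ∫ z, ‖z‖^2 ∂ν := by
    rw [hW]
    rw [integral_add (by exact (hintid.const_inner s).const_mul 2) hintnz]
    rw [integral_const_mul, integral_inner hintid, hm]
    simp
  have hWnn : 0 ≤ ∫ z, ‖z‖^2 ∂ν := integral_nonneg (fun z => by positivity)
  have key : ∫ z, exp (l * W z) ∂ν ≤ 1 + l + (163/50)*l^2*σ^2 := by
    have h1 : ∫ z, exp (l * W z) ∂ν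
        ≤ ∫ z, (1 + l * W z + ((163/200)*l^2*(4*σ^2))*‖z‖^2) ∂ν := by
      apply integral_mono_ae hintexp _ hWexp
      exact ((integrable_const 1).add (hintW.const_mul l)).add (hintnz.const_mul _)
    have h2 : ∫ z, (1 + l * W z + ((163/200)*l^2*(4*σ^2))*‖z‖^2) ∂ν
        = 1 + l * ∫ z, W z ∂ν + ((163/200)*l^2*(4*σ^2)) * ∫ z, ‖z‖^2 ∂ν := by
      have i1 : Integrable (fun z : H => 1 + l * W z) ν := by
        exact (integrable_const 1).add (hintW.const_mul l)
      have i2 : Integrable (fun z : H => ((163:ℝ)/200*l^2*(4*σ^2))*‖z‖^2) ν := by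
        exact hintnz.const_mul _
      rw [integral_add i1 i2, integral_add (integrable_const 1) (hintW.const_mul l)]
      simp [integral_const_mul]
    rw [h2, hintWval] at h1
    have hle : l * ∫ z, ‖z‖^2 ∂ν ≤ l := by nlinarith
    have hle2 : ((163/200)*l^2*(4*σ^2)) * ∫ z, ‖z‖^2 ∂ν ≤ (163/50)*l^2*σ^2 := by
      nlinarith [mul_le_mul_of_nonneg_left hv
        (show (0:ℝ) ≤ 163/200*l^2*(4*σ^2) by positivity)]
    linarith
  have hsplit : ∀ z, exp (l * ‖s + z‖^2) = exp (l * ‖s‖^2) * exp (l * W z) := by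
    intro z
    rw [← Real.exp_add]
    congr 1
    have hn := norm_add_sq_real s z
    simp only [hW]
    linear_combination l * hn
  calc ∫ z, exp (l * ‖s + z‖^2) ∂ν = exp (l*‖s‖^2) * ∫ z, exp (l * W z) ∂ν := by
        simp_rw [hsplit]; rw [integral_const_mul]
    _ ≤ exp (l*‖s‖^2) * (1 + l + (163/50)*l^2*σ^2) := by
        apply mul_le_mul_of_nonneg_left key (le_of_lt (exp_pos _))
    _ ≤ exp (l*‖s‖^2) * exp (l + (163/50)*l^2*σ^2) := by
        apply mul_le_mul_of_nonneg_left _ (le_of_lt (exp_pos _))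
        linarith [Real.add_one_le_exp (l + (163/50)*l^2*σ^2)]
    _ ≤ _ := by
        rw [← Real.exp_add]
        apply exp_le_exp.2
        have hσ2 : σ^2 ≤ (13/10)*‖s‖^2 + 13/3 := by
          rw [hσ]; nlinarith [sq_nonneg (3*‖s‖ - 10)]
        nlinarith [mul_le_mul_of_nonneg_left hσ2 (sq_nonneg l),
          mul_nonneg (sq_nonneg l) (sq_nonneg ‖s‖), sq_nonneg l]

lemma step_omega {Ω : Type*} [MeasureSpace Ω] [IsProbabilityMeasure (ℙ : Measure Ω)]
    {S Z : Ω → H} (hS : Measurable S) (hZ : Measurable Z)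
    (hind : IndepFun S Z ℙ)
    (hb : ∀ᵐ ω, ‖Z ω‖ ≤ 2) (hm : ∫ ω, Z ω = 0) (hv : ∫ ω, ‖Z ω‖^2 ≤ 1)
    {B : ℝ} (hB : 0 ≤ B) (hSb : ∀ᵐ ω, ‖S ω‖ ≤ B)
    {l : ℝ} (hl : 0 ≤ l) (hsmall : 4*l*(B+1) ≤ 6/5) :
    ∫ ω, exp (l * ‖S ω + Z ω‖^2)
      ≤ exp (l + 15*l^2) * ∫ ω, exp ((l + (17/4)*l^2) * ‖S ω‖^2) := by
  set μ1 : Measure H := (ℙ : Measure Ω).map S with hμ1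
  set μ2 : Measure H := (ℙ : Measure Ω).map Z with hμ2
  have i1 : IsProbabilityMeasure μ1 := Measure.isProbabilityMeasure_map hS.aemeasurable
  have i2 : IsProbabilityMeasure μ2 := Measure.isProbabilityMeasure_map hZ.aemeasurable
  have hpairmeas : Measurable (fun ω => (S ω, Z ω)) := hS.prodMk hZ
  have hmap : (ℙ : Measure Ω).map (fun ω => (S ω, Z ω)) = μ1.prod μ2 :=
    (indepFun_iff_map_prod_eq_prod_map_map hS.aemeasurable hZ.aemeasurable).1 hind
  have hset2 : MeasurableSet {z : H | ‖z‖ ≤ 2} :=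
    (isClosed_le continuous_norm continuous_const).measurableSet
  have hsetB : MeasurableSet {z : H | ‖z‖ ≤ B} :=
    (isClosed_le continuous_norm continuous_const).measurableSet
  have h2b : ∀ᵐ z ∂μ2, ‖z‖ ≤ 2 := by
    rw [hμ2, ae_map_iff hZ.aemeasurable hset2]; exact hb
  have h2m : ∫ z, z ∂μ2 = 0 := by
    rw [hμ2, show (∫ z, z ∂((ℙ : Measure Ω).map Z)) = ∫ ω, Z ω from
      integral_map hZ.aemeasurable aestronglyMeasurable_id]
    exact hm
  have h2v : ∫ z, ‖z‖^2 ∂μ2 ≤ 1 := by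
    rw [hμ2, integral_map (f := fun z : H => ‖z‖^2) hZ.aemeasurable
      ((continuous_norm.pow 2).aestronglyMeasurable)]
    exact hv
  have h1B : ∀ᵐ s ∂μ1, ‖s‖ ≤ B := by
    rw [hμ1, ae_map_iff hS.aemeasurable hsetB]; exact hSb
  -- a.e. bounds on the product
  have haeB : ∀ᵐ p ∂(μ1.prod μ2), ‖p.1‖ ≤ B := by
    rw [← hmap]
    exact (ae_map_iff hpairmeas.aemeasurable (hsetB.preimage measurable_fst)).2 hSb
  have hae2 : ∀ᵐ p ∂(μ1.prod μ2), ‖p.2‖ ≤ 2 := by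
    rw [← hmap]
    exact (ae_map_iff hpairmeas.aemeasurable (hset2.preimage measurable_snd)).2 hb
  set F : H × H → ℝ := fun p => exp (l * ‖p.1 + p.2‖^2) with hF
  have hFcont : Continuous F := by
    apply Real.continuous_exp.comp
    exact continuous_const.mul (((continuous_fst.add continuous_snd).norm).pow 2)
  have hFint : Integrable F (μ1.prod μ2) := by
    apply (integrable_const (exp (l * (B+2)^2))).mono' hFcont.aestronglyMeasurable
    filter_upwards [haeB, hae2] with p h1 h2
    rw [Real.norm_eq_abs, abs_of_pos (exp_pos _)]
    apply exp_le_exp.2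
    have hn : ‖p.1 + p.2‖ ≤ B + 2 := le_trans (norm_add_le _ _) (by linarith)
    have hn2 : ‖p.1 + p.2‖^2 ≤ (B+2)^2 := by nlinarith [norm_nonneg (p.1 + p.2)]
    exact mul_le_mul_of_nonneg_left hn2 hl
  have e1 : ∫ ω, exp (l * ‖S ω + Z ω‖^2) = ∫ p, F p ∂(μ1.prod μ2) := by
    rw [← hmap, integral_map hpairmeas.aemeasurable hFcont.aestronglyMeasurable]
  have e2 : ∫ p, F p ∂(μ1.prod μ2) = ∫ s, (∫ z, exp (l * ‖s + z‖^2) ∂μ2) ∂μ1 :=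
    integral_prod F hFint
  have e3 : ∫ s, (∫ z, exp (l * ‖s + z‖^2) ∂μ2) ∂μ1
      ≤ ∫ s, exp ((l + (17/4)*l^2)*‖s‖^2 + (l + 15*l^2)) ∂μ1 := by
    have hmeasg : Measurable fun s : H => exp ((l + (17/4)*l^2)*‖s‖^2 + (l + 15*l^2)) :=
      (((measurable_norm.pow_const 2).const_mul _).add measurable_const).exp
    apply integral_mono_ae hFint.integral_prod_left
    · apply (integrable_const (exp ((l + (17/4)*l^2)*B^2 + (l + 15*l^2)))).mono'
        hmeasg.aestronglyMeasurable
      filter_upwards [h1B] with s hs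
      rw [Real.norm_eq_abs, abs_of_pos (exp_pos _)]
      apply exp_le_exp.2
      have : ‖s‖^2 ≤ B^2 := by nlinarith [norm_nonneg s]
      nlinarith [sq_nonneg l]
    · filter_upwards [h1B] with s hs
      apply inner_step μ2 h2b h2m h2v s hl
      have : 4*l*(‖s‖+1) ≤ 4*l*(B+1) := by nlinarith
      linarith
  have e4 : ∫ s, exp ((l + (17/4)*l^2)*‖s‖^2 + (l + 15*l^2)) ∂μ1
      = exp (l + 15*l^2) * ∫ s, exp ((l + (17/4)*l^2)*‖s‖^2) ∂μ1 := by
    simp_rw [Real.exp_add]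
    rw [integral_mul_const, mul_comm]
  have e5 : ∫ s, exp ((l + (17/4)*l^2)*‖s‖^2) ∂μ1
      = ∫ ω, exp ((l + (17/4)*l^2) * ‖S ω‖^2) := by
    have hmeasg2 : Measurable fun s : H => exp ((l + (17/4)*l^2)*‖s‖^2) :=
      ((measurable_norm.pow_const 2).const_mul _).exp
    rw [hμ1, show (∫ s, exp ((l + (17/4)*l^2)*‖s‖^2) ∂((ℙ : Measure Ω).map S))
      = ∫ ω, exp ((l + (17/4)*l^2) * ‖S ω‖^2) from
      integral_map hS.aemeasurable hmeasg2.aestronglyMeasurable]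
  rw [e1, e2, ← e5, ← e4]
  exact e3

set_option maxHeartbeats 1000000 in
lemma main_bound {Ω : Type*} [MeasureSpace Ω] [IsProbabilityMeasure (ℙ : Measure Ω)]
    {n : ℕ} (hn : 8 ≤ n) (Z : Fin n → Ω → H)
    (hmeas : ∀ i, Measurable (Z i))
    (hindep : iIndepFun Z ℙ)
    (hmean : ∀ i, ∫ ω, Z i ω = 0)
    (hb : ∀ i, ∀ᵐ ω, ‖Z i ω‖ ≤ 2)
    (hv : ∀ i, ∫ ω, ‖Z i ω‖^2 ≤ 1) :
    ℙ {ω | 4 * Real.sqrt (n * Real.log n) < ‖∑ i, Z i ω‖} ≤ ((n : ENNReal))⁻¹ ^ 2 := by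
  have hn0 : (0:ℝ) < n := by positivity
  set lam : ℕ → ℝ := fun m => 12 / (29*(n:ℝ) + 51*m) with hlam
  set q : ℝ := lam 0 + 15*(lam 0)^2 with hq
  set S : ℕ → Ω → H := fun m ω => ∑ i ∈ Finset.univ.filter (fun i : Fin n => (i:ℕ) < m), Z i ω
    with hS
  have hSmeas : ∀ m, Measurable (S m) := fun m =>
    Finset.measurable_sum _ (fun i _ => hmeas i)
  have hlam_pos : ∀ m : ℕ, 0 < lam m := by
    intro m; apply div_pos (by norm_num); positivity
  -- a.s. norm bound on partial sums
  have hball : ∀ᵐ ω, ∀ i, ‖Z i ω‖ ≤ 2 := (ae_all_iff).2 hb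
  have hbS : ∀ m : ℕ, ∀ᵐ ω, ‖S m ω‖ ≤ 2*m := by
    intro m
    filter_upwards [hball] with ω hω
    have hcard : (Finset.univ.filter (fun i : Fin n => (i:ℕ) < m)).card ≤ m := by
      have hmt : ∀ i ∈ Finset.univ.filter (fun i : Fin n => (i:ℕ) < m),
          (i:ℕ) ∈ Finset.range m := by
        intro i hi
        rw [Finset.mem_range]
        exact (Finset.mem_filter.1 hi).2
      have := Finset.card_le_card_of_injOn (fun i : Fin n => (i:ℕ)) hmt
        (fun i _ j _ h => Fin.ext h)
      simpa using this
    calc ‖S m ω‖ ≤ ∑ i ∈ Finset.univ.filter (fun i : Fin n => (i:ℕ) < m), ‖Z i ω‖ :=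
          norm_sum_le _ _
      _ ≤ ∑ i ∈ Finset.univ.filter (fun i : Fin n => (i:ℕ) < m), 2 :=
          Finset.sum_le_sum (fun i _ => hω i)
      _ = (Finset.univ.filter (fun i : Fin n => (i:ℕ) < m)).card * 2 := by
          rw [Finset.sum_const]; simp [mul_comm]
      _ ≤ 2*m := by
          have : ((Finset.univ.filter (fun i : Fin n => (i:ℕ) < m)).card : ℝ) ≤ m := by
            exact_mod_cast hcard
          linarith
  -- integrability helper
  have intexp : ∀ (c : ℝ) (m : ℕ), 0 ≤ c →
      Integrable (fun ω => exp (c * ‖S m ω‖^2)) ℙ := by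
    intro c m hc
    apply (integrable_const (exp (c * (2*m)^2))).mono'
      (((hSmeas m).norm.pow_const 2).const_mul c).exp.aestronglyMeasurable
    filter_upwards [hbS m] with ω hω
    rw [Real.norm_eq_abs, abs_of_pos (exp_pos _)]
    apply exp_le_exp.2
    have h2 : ‖S m ω‖^2 ≤ (2*m)^2 := by nlinarith [norm_nonneg (S m ω)]
    exact mul_le_mul_of_nonneg_left h2 hc
  -- the key induction
  have claim : ∀ m : ℕ, m ≤ n → ∫ ω, exp (lam m * ‖S m ω‖^2) ≤ exp (m * q) := by
    intro m
    induction m with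
    | zero =>
      intro _
      have hS0 : S 0 = fun _ => 0 := by
        funext ω
        rw [hS]
        simp
      rw [hS0]
      simp
    | succ m ih =>
      intro hm1
      have hmn : m < n := hm1
      have hIH := ih (le_of_lt hmn)
      set i0 : Fin n := ⟨m, hmn⟩ with hi0
      have hnotmem : i0 ∉ Finset.univ.filter (fun i : Fin n => (i:ℕ) < m) := by
        simp [hi0]
      have hfil : Finset.univ.filter (fun i : Fin n => (i:ℕ) < m+1)
          = insert i0 (Finset.univ.filter (fun i : Fin n => (i:ℕ) < m)) := by
        ext i
        simp only [Finset.mem_filter, Finset.mem_univ, true_and, Finset.mem_insert]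
        constructor
        · intro h
          rcases Nat.lt_succ_iff_lt_or_eq.1 h with h' | h'
          · exact Or.inr h'
          · exact Or.inl (Fin.ext h')
        · rintro (rfl | h)
          · exact Nat.lt_succ_self m
          · exact Nat.lt_succ_of_lt h
      have hSsucc : S (m+1) = fun ω => S m ω + Z i0 ω := by
        funext ω
        rw [hS]
        simp only
        rw [hfil, Finset.sum_insert hnotmem]
        rw [add_comm]
      -- independence
      have hind : IndepFun (S m) (Z i0) ℙ := by
        have h := hindep.indepFun_finsetSum_of_notMem hmeas hnotmem
        have heq : (∑ j ∈ Finset.univ.filter (fun i : Fin n => (i:ℕ) < m), Z j) = S m := by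
          funext ω
          rw [hS]
          simp [Finset.sum_apply]
        rwa [heq] at h
      -- numeric facts
      have hd : (0:ℝ) < 29*(n:ℝ) + 51*m := by positivity
      have hd1 : (0:ℝ) < 29*(n:ℝ) + 51*(m+1:ℕ) := by positivity
      have hl1 : 0 ≤ lam (m+1) := (hlam_pos (m+1)).le
      have hsmall : 4 * lam (m+1) * (2*(m:ℝ)+1) ≤ 6/5 := by
        rw [hlam]
        simp only
        have heq : 4 * (12 / (29*(n:ℝ) + 51*(m+1:ℕ))) * (2*(m:ℝ)+1)
            = (48*(2*(m:ℝ)+1)) / (29*(n:ℝ) + 51*(m+1:ℕ)) := by ring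
        rw [heq, div_le_iff₀ hd1]
        push_cast
        have : (m:ℝ) + 1 ≤ n := by exact_mod_cast hmn
        nlinarith
      have hcoeff : lam (m+1) + (17/4)*(lam (m+1))^2 ≤ lam m := by
        rw [hlam]
        simp only
        set a : ℝ := 29*(n:ℝ) + 51*((m:ℕ)+1:ℕ) with ha
        set b : ℝ := 29*(n:ℝ) + 51*(m:ℕ) with hbdef
        have hapos : (0:ℝ) < a := by rw [ha]; positivity
        have hbpos : (0:ℝ) < b := by rw [hbdef]; positivity
        have hab : a = b + 51 := by rw [ha, hbdef]; push_cast; ring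
        have hexp : 12/a + 17/4*(12/a)^2 = (12*a + 612)/a^2 := by
          field_simp
          ring
        rw [hexp, div_le_div_iff₀ (by positivity) hbpos]
        nlinarith [hbpos]
      have hlam_le : lam (m+1) ≤ lam 0 := by
        rw [hlam]
        simp only
        apply div_le_div_of_nonneg_left (by norm_num) (by positivity)
        push_cast
        linarith [Nat.cast_nonneg (α := ℝ) m]
      have hqb : lam (m+1) + 15*(lam (m+1))^2 ≤ q := by
        rw [hq]
        nlinarith [hlam_pos (m+1), hlam_pos 0]
      -- apply step
      have hstep := step_omega (hSmeas m) (hmeas i0) hind (hb i0) (hmean i0) (hv i0)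
        (B := 2*m) (by positivity) (hbS m) hl1 (by push_cast; linarith [hsmall])
      have hmono : ∫ ω, exp ((lam (m+1) + (17/4)*(lam (m+1))^2) * ‖S m ω‖^2)
          ≤ ∫ ω, exp (lam m * ‖S m ω‖^2) := by
        apply integral_mono_ae (intexp _ m (by positivity)) (intexp _ m (hlam_pos m).le)
        apply ae_of_all
        intro ω
        apply exp_le_exp.2
        exact mul_le_mul_of_nonneg_right hcoeff (sq_nonneg _)
      calc ∫ ω, exp (lam (m+1) * ‖S (m+1) ω‖^2)
          = ∫ ω, exp (lam (m+1) * ‖S m ω + Z i0 ω‖^2) := by rw [hSsucc]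
        _ ≤ exp (lam (m+1) + 15*(lam (m+1))^2)
            * ∫ ω, exp ((lam (m+1) + (17/4)*(lam (m+1))^2) * ‖S m ω‖^2) := hstep
        _ ≤ exp q * exp (m * q) := by
            apply mul_le_mul (exp_le_exp.2 hqb) (le_trans hmono hIH)
              (integral_nonneg (fun ω => (exp_pos _).le)) (exp_pos _).le
        _ = exp ((m+1 : ℕ) * q) := by
            rw [← Real.exp_add]
            congr 1
            push_cast
            ring
  -- Markov step
  have hfinal := claim n le_rfl
  have hSn : S n = fun ω => ∑ i, Z i ω := by
    funext ω
    rw [hS]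
    simp only
    congr 1
    apply Finset.filter_true_of_mem
    intro i _
    exact i.isLt
  set t : ℝ := 4 * Real.sqrt (n * Real.log n) with hT
  have hlogn : (2:ℝ) ≤ Real.log n := by
    rw [Real.le_log_iff_exp_le hn0]
    have h1 : Real.exp 2 = Real.exp 1 * Real.exp 1 := by
      rw [← Real.exp_add]; norm_num
    have h2 : Real.exp 1 < 2.7182818286 := Real.exp_one_lt_d9
    have h8 : (8:ℝ) ≤ n := by exact_mod_cast hn
    nlinarith [Real.exp_pos 1]
  have htnn : 0 ≤ t := by rw [hT]; positivity
  have ht2 : t^2 = 16 * ((n:ℝ) * Real.log n) := by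
    rw [hT, mul_pow, Real.sq_sqrt (by nlinarith)]
    norm_num
  set c : ℝ := exp (lam n * t^2) with hc
  have hbadsub : {ω | t < ‖∑ i, Z i ω‖} ⊆ {ω | c ≤ exp (lam n * ‖S n ω‖^2)} := by
    intro ω hω
    simp only [Set.mem_setOf_eq] at hω ⊢
    rw [hc, hSn]
    apply exp_le_exp.2
    apply mul_le_mul_of_nonneg_left _ (hlam_pos n).le
    nlinarith [hω, htnn]
  have hmarkov := mul_meas_ge_le_integral_of_nonneg
    (f := fun ω => exp (lam n * ‖S n ω‖^2)) (μ := ℙ)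
    (ae_of_all _ (fun ω => (exp_pos _).le)) (intexp _ n (hlam_pos n).le) c
  have hmeasbad : (ℙ {ω | c ≤ exp (lam n * ‖S n ω‖^2)}).toReal
      ≤ exp ((n:ℝ) * q) / c := by
    rw [le_div_iff₀ (by rw [hc]; exact exp_pos _)]
    calc (ℙ {ω | c ≤ exp (lam n * ‖S n ω‖^2)}).toReal * c
        = c * (ℙ {ω | c ≤ exp (lam n * ‖S n ω‖^2)}).toReal := by ring
      _ ≤ ∫ ω, exp (lam n * ‖S n ω‖^2) := hmarkov
      _ ≤ exp ((n:ℝ) * q) := hfinal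
  have hnumeric : exp ((n:ℝ) * q) / c ≤ ((n:ℝ)⁻¹)^2 := by
    rw [hc, ← Real.exp_sub]
    have hinv : ((n:ℝ)⁻¹)^2 = exp (-(2 * Real.log n)) := by
      rw [Real.exp_neg]
      rw [show (2:ℝ) * Real.log n = Real.log n + Real.log n by ring]
      rw [Real.exp_add, Real.exp_log hn0]
      rw [inv_pow]
      congr 1
      ring
    rw [hinv]
    apply exp_le_exp.2
    -- n*q - lam n * t² ≤ -2 log n
    rw [ht2]
    have h8 : (8:ℝ) ≤ n := by exact_mod_cast hn
    have hlam0 : lam 0 = 12 / (29*(n:ℝ)) := by rw [hlam]; norm_num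
    have hlamnval : lam n = 12 / (80*(n:ℝ)) := by
      rw [hlam]
      simp only
      have : 29*(n:ℝ) + 51*(n:ℕ) = 80*(n:ℝ) := by push_cast; ring
      rw [this]
    rw [hq, hlam0, hlamnval]
    have h1 : (n:ℝ) * (12/(29*(n:ℝ)) + 15*(12/(29*(n:ℝ)))^2)
        = 12/29 + 2160/(841*(n:ℝ)) := by
      field_simp
      ring
    have h2 : 12/(80*(n:ℝ)) * (16 * ((n:ℝ) * Real.log n)) = (12/5) * Real.log n := by
      field_simp
      ring
    rw [h1, h2]
    have hdiv : 2160/(841*(n:ℝ)) ≤ 2160/(841*8) := by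
      apply div_le_div_of_nonneg_left (by norm_num) (by positivity)
      nlinarith
    nlinarith [hlogn]
  -- assemble in ENNReal
  have hmeasset : MeasurableSet {ω | c ≤ exp (lam n * ‖S n ω‖^2)} := by
    apply measurableSet_le measurable_const
    exact (((hSmeas n).norm.pow_const 2).const_mul _).exp
  have hfin : ℙ {ω | t < ‖∑ i, Z i ω‖} ≤ ℙ {ω | c ≤ exp (lam n * ‖S n ω‖^2)} :=
    measure_mono hbadsub
  have hle2 : ℙ {ω | c ≤ exp (lam n * ‖S n ω‖^2)} ≤ ENNReal.ofReal (((n:ℝ)⁻¹)^2) := by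
    rw [← ENNReal.ofReal_toReal (measure_ne_top ℙ _)]
    apply ENNReal.ofReal_le_ofReal
    exact le_trans hmeasbad hnumeric
  have hofreal : ENNReal.ofReal (((n:ℝ)⁻¹)^2) = ((n : ENNReal))⁻¹ ^ 2 := by
    rw [ENNReal.ofReal_pow (by positivity)]
    congr 1
    rw [ENNReal.ofReal_inv_of_pos hn0]
    congr 1
    exact ENNReal.ofReal_natCast n
  calc ℙ {ω | t < ‖∑ i, Z i ω‖} ≤ ENNReal.ofReal (((n:ℝ)⁻¹)^2) := le_trans hfin hle2
    _ = ((n : ENNReal))⁻¹ ^ 2 := hofreal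

-- small n numeric fact
lemma smalln {n : ℕ} (h2 : 2 ≤ n) (h7 : n ≤ 7) : (n:ℝ) ≤ 4 * Real.log n := by
  have hn0 : (0:ℝ) < n := by positivity
  have he : Real.exp 1 < 2.7182818286 := Real.exp_one_lt_d9
  have hepos : (0:ℝ) < Real.exp 1 := Real.exp_pos 1
  have hek : Real.exp (n:ℝ) = Real.exp 1 ^ (n:ℕ) := by
    rw [← Real.exp_nat_mul]; norm_num
  have hpow : Real.exp 1 ^ (n:ℕ) ≤ (2.7182818286:ℝ) ^ (n:ℕ) :=
    pow_le_pow_left₀ hepos.le he.le n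
  have hexpk : Real.exp (n:ℝ) ≤ (n:ℝ)^4 := by
    rw [hek]
    refine le_trans hpow ?_
    interval_cases n <;> norm_num
  have key : Real.exp ((n:ℝ)/4) ≤ (n:ℝ) := by
    have h4 : Real.exp ((n:ℝ)/4)^(4:ℕ) = Real.exp (n:ℝ) := by
      rw [← Real.exp_nat_mul]; norm_num; ring_nf
    apply le_of_pow_le_pow_left₀ (n := 4) (by norm_num) (le_of_lt hn0)
    rw [h4]
    exact hexpk
  have := (Real.le_log_iff_exp_le hn0).2 key
  linarith
end Helpers

local notation "⟪" x ", " y "⟫" => @inner ℝ _ _ x y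

/-- Let `X_1, …, X_n` (`n ≥ 2`) be i.i.d. random variables with values in a real separable
Hilbert space, with `‖X_i‖ ≤ 1` almost surely, and `ε_n = 4 √((log n)/n)`. Then with
probability at least `1 − n⁻²`, `‖(1/n) Σ_i X_i − E[X_1]‖ ≤ ε_n`. -/
theorem stmt8
    {H : Type*} [NormedAddCommGroup H] [InnerProductSpace ℝ H] [CompleteSpace H]
    [SecondCountableTopology H] [MeasurableSpace H] [BorelSpace H]
    {Ω : Type*} [MeasureSpace Ω] [IsProbabilityMeasure (ℙ : Measure Ω)]
    (n : ℕ) (hn : 2 ≤ n) (X : Fin n → Ω → H)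
    (hmeas : ∀ i, Measurable (X i))
    (hindep : iIndepFun X ℙ)
    (hident : ∀ i, IdentDistrib (X i) (X ⟨0, by omega⟩) ℙ ℙ)
    (hbound : ∀ i, ∀ᵐ ω, ‖X i ω‖ ≤ 1) :
    1 - ((n : ENNReal))⁻¹ ^ 2 ≤
      ℙ {ω | ‖(n : ℝ)⁻¹ • ∑ i, X i ω - ∫ ω', X ⟨0, by omega⟩ ω'‖ ≤ 4 * Real.sqrt (Real.log n / n)} := by
  have hn0 : (0:ℝ) < n := by positivity
  have hnne : (n:ℝ) ≠ 0 := ne_of_gt hn0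
  set i0 : Fin n := ⟨0, by omega⟩ with hi0
  set μ : H := ∫ ω', X i0 ω' with hμ
  have hint : ∀ i, Integrable (X i) ℙ := fun i =>
    (integrable_const (1:ℝ)).mono' (hmeas i).aestronglyMeasurable
      (by filter_upwards [hbound i] with ω h using h)
  have hμeq : ∀ i, ∫ ω, X i ω = μ := fun i => (hident i).integral_eq
  have hμnorm : ‖μ‖ ≤ 1 := by
    calc ‖μ‖ ≤ ∫ ω, ‖X i0 ω‖ := norm_integral_le_integral_norm _
      _ ≤ ∫ _ω : Ω, (1:ℝ) := integral_mono_ae (hint i0).norm (integrable_const 1) (hbound i0)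
      _ = 1 := by simp
  have hball : ∀ᵐ ω, ∀ i, ‖X i ω‖ ≤ 1 := (ae_all_iff).2 hbound
  -- the event rewritten
  have hkey : ∀ ω, (n : ℝ)⁻¹ • ∑ i, X i ω - μ = (n:ℝ)⁻¹ • ∑ i, (X i ω - μ) := by
    intro ω
    rw [Finset.sum_sub_distrib, Finset.sum_const, Finset.card_univ, Fintype.card_fin]
    rw [smul_sub]
    congr 1
    rw [← Nat.cast_smul_eq_nsmul ℝ n μ, smul_smul, inv_mul_cancel₀ hnne, one_smul]
  by_cases h8 : 8 ≤ n
  · -- main case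
    set Z : Fin n → Ω → H := fun i ω => X i ω - μ with hZ
    have hZmeas : ∀ i, Measurable (Z i) := fun i => (hmeas i).sub measurable_const
    have hZindep : iIndepFun Z ℙ :=
      hindep.comp (fun _ x => x - μ) (fun _ => measurable_id.sub measurable_const)
    have hZmean : ∀ i, ∫ ω, Z i ω = 0 := by
      intro i
      rw [hZ]
      simp only
      rw [integral_sub (hint i) (integrable_const μ), integral_const]
      simp [hμeq i]
    have hZb : ∀ i, ∀ᵐ ω, ‖Z i ω‖ ≤ 2 := by
      intro i
      filter_upwards [hbound i] with ω h
      calc ‖Z i ω‖ ≤ ‖X i ω‖ + ‖μ‖ := norm_sub_le _ _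
        _ ≤ 2 := by linarith
    have hZv : ∀ i, ∫ ω, ‖Z i ω‖^2 ≤ 1 := by
      intro i
      have hexp : ∀ ω, ‖Z i ω‖^2 = ‖X i ω‖^2 - 2*⟪μ, X i ω⟫ + ‖μ‖^2 := by
        intro ω
        rw [hZ]
        simp only
        rw [norm_sub_sq_real, real_inner_comm]
      have hint1 : Integrable (fun ω => ‖X i ω‖^2) ℙ := by
        apply (integrable_const (1:ℝ)).mono'
          ((hmeas i).norm.pow_const 2).aestronglyMeasurable
        filter_upwards [hbound i] with ω h
        rw [Real.norm_eq_abs, abs_of_nonneg (by positivity)]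
        nlinarith [norm_nonneg (X i ω)]
      have hint2 : Integrable (fun ω => ⟪μ, X i ω⟫) ℙ := (hint i).const_inner μ
      simp_rw [hexp]
      have i2 : Integrable (fun ω => 2*⟪μ, X i ω⟫) ℙ := by exact hint2.const_mul 2
      have i12 : Integrable (fun ω => ‖X i ω‖^2 - 2*⟪μ, X i ω⟫) ℙ := by exact hint1.sub i2
      rw [integral_add i12 (integrable_const _),
        integral_sub hint1 i2, integral_const_mul,
        integral_inner (hint i), hμeq i, integral_const]
      have h1 : ∫ ω, ‖X i ω‖^2 ≤ 1 := by
        calc ∫ ω, ‖X i ω‖^2 ≤ ∫ _ω : Ω, (1:ℝ) := by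
              apply integral_mono_ae hint1 (integrable_const 1)
              filter_upwards [hbound i] with ω h
              nlinarith [norm_nonneg (X i ω)]
          _ = 1 := by simp
      have h2 : ⟪μ, μ⟫ = ‖μ‖^2 := real_inner_self_eq_norm_sq μ
      simp only [measure_univ, probReal_univ, ENNReal.toReal_one, one_smul, smul_eq_mul]
      nlinarith [h1, h2]
    have hmain := main_bound h8 Z hZmeas hZindep hZmean hZb hZv
    -- set inclusion
    have hsqrt : (n:ℝ)⁻¹ * (4 * Real.sqrt ((n:ℝ) * Real.log n))
        = 4 * Real.sqrt (Real.log n / n) := by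
      have hlogn : (0:ℝ) ≤ Real.log n := Real.log_nonneg (by exact_mod_cast hn.trans' (by norm_num))
      have h1 : Real.log n / n = ((n:ℝ) * Real.log n) / (n:ℝ)^2 := by
        field_simp
      rw [h1, Real.sqrt_div (by positivity), Real.sqrt_sq hn0.le]
      field_simp
    have hsub2 : {ω | ‖∑ i, Z i ω‖ ≤ 4 * Real.sqrt ((n:ℝ) * Real.log n)} ⊆
        {ω | ‖(n : ℝ)⁻¹ • ∑ i, X i ω - μ‖ ≤ 4 * Real.sqrt (Real.log n / n)} := by
      intro ω hω
      simp only [Set.mem_setOf_eq] at hω ⊢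
      rw [hkey ω]
      have hZeq : ∑ i, (X i ω - μ) = ∑ i, Z i ω := by rw [hZ]
      rw [hZeq, norm_smul, Real.norm_eq_abs, abs_of_pos (inv_pos.2 hn0), ← hsqrt]
      exact mul_le_mul_of_nonneg_left hω (by positivity)
    have hmeaslt : MeasurableSet {ω | 4 * Real.sqrt ((n:ℝ) * Real.log n) < ‖∑ i, Z i ω‖} := by
      apply measurableSet_lt measurable_const
      exact (Finset.measurable_sum _ (fun i _ => hZmeas i)).norm
    have hcompl : {ω | ‖∑ i, Z i ω‖ ≤ 4 * Real.sqrt ((n:ℝ) * Real.log n)}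
        = {ω | 4 * Real.sqrt ((n:ℝ) * Real.log n) < ‖∑ i, Z i ω‖}ᶜ := by
      ext ω; simp [not_lt]
    calc 1 - ((n : ENNReal))⁻¹ ^ 2
        ≤ 1 - ℙ {ω | 4 * Real.sqrt ((n:ℝ) * Real.log n) < ‖∑ i, Z i ω‖} :=
          tsub_le_tsub_left hmain 1
      _ = ℙ {ω | ‖∑ i, Z i ω‖ ≤ 4 * Real.sqrt ((n:ℝ) * Real.log n)} := by
          rw [hcompl, prob_compl_eq_one_sub hmeaslt]
      _ ≤ _ := measure_mono hsub2
  · -- trivial case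
    push_neg at h8
    have hlogn : (n:ℝ) ≤ 4 * Real.log n := smalln hn (by omega)
    have hsub : ∀ᵐ ω, ω ∈ Set.univ →
        ω ∈ {ω | ‖(n : ℝ)⁻¹ • ∑ i, X i ω - μ‖ ≤ 4 * Real.sqrt (Real.log n / n)} := by
      filter_upwards [hball] with ω hω _
      have hsum : ‖∑ i, X i ω‖ ≤ n := by
        calc ‖∑ i, X i ω‖ ≤ ∑ i, ‖X i ω‖ := norm_sum_le _ _
          _ ≤ ∑ _i : Fin n, (1:ℝ) := Finset.sum_le_sum (fun i _ => hω i)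
          _ = n := by simp
      have h1 : ‖(n : ℝ)⁻¹ • ∑ i, X i ω - μ‖ ≤ 2 := by
        calc ‖(n : ℝ)⁻¹ • ∑ i, X i ω - μ‖ ≤ ‖(n : ℝ)⁻¹ • ∑ i, X i ω‖ + ‖μ‖ := norm_sub_le _ _
          _ ≤ (n:ℝ)⁻¹ * n + 1 := by
              rw [norm_smul, Real.norm_eq_abs, abs_of_pos (by positivity)]
              have := mul_le_mul_of_nonneg_left hsum (le_of_lt (inv_pos.2 hn0))
              linarith
          _ = 2 := by rw [inv_mul_cancel₀ hnne]; norm_num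
      have h2 : (2:ℝ) ≤ 4 * Real.sqrt (Real.log n / n) := by
        have hq : (1/2:ℝ) ≤ Real.sqrt (Real.log n / n) := by
          rw [show (1/2:ℝ) = Real.sqrt (1/4) by
            rw [show (1/4:ℝ) = (1/2)^2 by norm_num, Real.sqrt_sq (by norm_num)]]
          apply Real.sqrt_le_sqrt
          rw [le_div_iff₀ hn0]
          linarith
        linarith
      linarith
    calc 1 - ((n : ENNReal))⁻¹ ^ 2 ≤ 1 := tsub_le_self
      _ = ℙ (Set.univ : Set Ω) := (measure_univ).symm
      _ ≤ _ := measure_mono_ae hsub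
end

section
/- Let T : H → H₂ be a bounded linear operator between real Hilbert spaces, y ∈ H₂, S = T*T and b = T*y. Suppose the conjugate gradient recursion applied to S and b is run for m steps without breakdown (‖u_j‖ ≠ 0 and ⟨d_j, S d_j⟩ ≠ 0 for j < m). Then the m-th iterate g_m belongs to the Krylov space K_m(b, S) and minimizes ‖y − T g‖ over all g ∈ K_m(b, S). -/
open scoped RealInnerProductSpace
open ContinuousLinearMap

/-- Let `S = T*T` and `b = T*y`. If the conjugate gradient recursion applied to `S` and `b`
is run for `m` steps without breakdown, then the `m`-th iterate `g_m` belongs to the Krylov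
space `K_m(b, S) = span{b, S b, …, S^{m−1} b}` and minimizes `‖y − T g‖` over `K_m(b, S)`. -/
theorem stmt10
    {H H₂ : Type*} [NormedAddCommGroup H] [InnerProductSpace ℝ H] [CompleteSpace H]
    [NormedAddCommGroup H₂] [InnerProductSpace ℝ H₂] [CompleteSpace H₂]
    (T : H →L[ℝ] H₂) (y : H₂)
    (S : H →L[ℝ] H) (hS : S = (adjoint T) ∘L T)
    (b : H) (hb : b = (adjoint T) y)
    (g u d : ℕ → H) (α β : ℕ → ℝ)
    (hg0 : g 0 = 0) (hu0 : u 0 = b) (hd0 : d 0 = b)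
    (hα : ∀ j, α j = ‖u j‖ ^ 2 / ⟪d j, S (d j)⟫)
    (hg : ∀ j, g (j + 1) = g j + α j • d j)
    (hu : ∀ j, u (j + 1) = u j - α j • S (d j))
    (hβ : ∀ j, β j = ‖u (j + 1)‖ ^ 2 / ‖u j‖ ^ 2)
    (hd : ∀ j, d (j + 1) = u (j + 1) + β j • d j)
    (m : ℕ)
    (hnb : ∀ j < m, ‖u j‖ ≠ 0 ∧ ⟪d j, S (d j)⟫ ≠ 0) :
    g m ∈ Submodule.span ℝ (Set.range fun i : Fin m => (S ^ (i : ℕ)) b) ∧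
      ∀ h ∈ Submodule.span ℝ (Set.range fun i : Fin m => (S ^ (i : ℕ)) b),
        ‖y - T (g m)‖ ≤ ‖y - T h‖ := by
  -- self-adjointness of S
  have hSsym : ∀ x z : H, ⟪S x, z⟫ = ⟪x, S z⟫ := by
    intro x z
    rw [hS]
    simp only [ContinuousLinearMap.comp_apply]
    rw [adjoint_inner_left, adjoint_inner_right]
  -- α nonzero in the breakdown-free range
  have hα_ne : ∀ k < m, α k ≠ 0 := by
    intro k hk
    rw [hα]
    exact div_ne_zero (pow_ne_zero 2 (hnb k hk).1) (hnb k hk).2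
  -- u k as combination of d's
  have hu_d : ∀ k, u k = d k - (if k = 0 then (0:ℝ) else β (k-1)) • d (k-1) := by
    intro k
    cases k with
    | zero => simp [hd0, hu0]
    | succ t => simp [hd t]
  -- S d k in terms of u's
  have hSd : ∀ k < m, S (d k) = (α k)⁻¹ • (u k - u (k+1)) := by
    intro k hk
    have h1 : α k • S (d k) = u k - u (k+1) := by rw [hu k]; abel
    rw [← h1, smul_smul, inv_mul_cancel₀ (hα_ne k hk), one_smul]
  -- main orthogonality induction
  have key : ∀ j, j ≤ m →
      (∀ i < j, ⟪u j, d i⟫ = 0) ∧ (∀ i < j, ⟪d j, S (d i)⟫ = 0) := by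
    intro j
    induction j with
    | zero => intro _; exact ⟨fun i hi => absurd hi (Nat.not_lt_zero i), fun i hi => absurd hi (Nat.not_lt_zero i)⟩
    | succ j ih =>
      intro hjm
      have hjm' : j ≤ m := Nat.le_of_succ_le hjm
      have hjlt : j < m := hjm
      obtain ⟨ihA, ihB⟩ := ih hjm'
      -- ⟪u j, d j⟫ = ‖u j‖²
      have hud : ⟪u j, d j⟫ = ‖u j‖ ^ 2 := by
        cases j with
        | zero => rw [hd0, ← hu0, real_inner_self_eq_norm_sq]
        | succ t =>
          rw [hd t, inner_add_right, real_inner_smul_right,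
            ihA t (Nat.lt_succ_self t), real_inner_self_eq_norm_sq]
          ring
      have hden := (hnb j hjlt).2
      have hASelf : ⟪u (j+1), d j⟫ = 0 := by
        rw [hu j, inner_sub_left, real_inner_smul_left, hSsym, hud, hα]
        field_simp
        ring
      have hA : ∀ i < j + 1, ⟪u (j+1), d i⟫ = 0 := by
        intro i hi
        rcases Nat.lt_succ_iff_lt_or_eq.mp hi with hi' | rfl
        · rw [hu j, inner_sub_left, real_inner_smul_left, hSsym, ihA i hi', ihB i hi']
          ring
        · exact hASelf
      refine ⟨hA, ?_⟩
      -- ⟪u (j+1), u k⟫ = 0 for k ≤ j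
      have hAu : ∀ k ≤ j, ⟪u (j+1), u k⟫ = 0 := by
        intro k hk
        rw [hu_d k, inner_sub_right, real_inner_smul_right,
          hA k (Nat.lt_succ_of_le hk), hA (k-1) (Nat.lt_succ_of_le ((Nat.sub_le k 1).trans hk))]
        ring
      intro i hi
      have him : i < m := lt_of_lt_of_le hi hjm
      rw [hd j, inner_add_left, real_inner_smul_left]
      rcases Nat.lt_succ_iff_lt_or_eq.mp hi with hi' | rfl
      · rw [ihB i hi', hSd i him, real_inner_smul_right, inner_sub_right,
          hAu i (le_of_lt hi'), hAu (i+1) hi']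
        ring
      · have t1 : ⟪u (i+1), S (d i)⟫ = (α i)⁻¹ * (0 - ‖u (i+1)‖ ^ 2) := by
          rw [hSd i hjlt, real_inner_smul_right, inner_sub_right, hAu i le_rfl,
            real_inner_self_eq_norm_sq]
        have t2 : (α i)⁻¹ = ⟪d i, S (d i)⟫ / ‖u i‖ ^ 2 := by
          rw [hα, inv_div]
        have hn2 : ‖u i‖ ^ 2 ≠ 0 := pow_ne_zero 2 (hnb i hjlt).1
        rw [t1, t2, hβ]
        field_simp
        ring
  -- residual identity
  have hres : ∀ j, u j = b - S (g j) := by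
    intro j
    induction j with
    | zero => simp [hu0, hg0]
    | succ j ih =>
      rw [hu j, ih, hg j, map_add, map_smul]
      abel
  -- Krylov chain
  set Kt : ℕ → Submodule ℝ H := fun t => Submodule.span ℝ ((fun i : ℕ => (S ^ i) b) '' Set.Iio t) with hKt
  have hKmono : ∀ {s t : ℕ}, s ≤ t → Kt s ≤ Kt t := by
    intro s t hst
    exact Submodule.span_mono (Set.image_mono (fun x hx => lt_of_lt_of_le hx hst))
  have hKS : ∀ t, ∀ x ∈ Kt t, S x ∈ Kt (t+1) := by
    intro t x hx
    induction hx using Submodule.span_induction with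
    | mem z hz =>
      obtain ⟨i, hi, rfl⟩ := hz
      have : S ((S ^ i) b) = (S ^ (i+1)) b := by rw [pow_succ']; rfl
      rw [this]
      exact Submodule.subset_span ⟨i+1, Nat.succ_lt_succ hi, rfl⟩
    | zero => simp
    | add a c _ _ ha hc => rw [map_add]; exact add_mem ha hc
    | smul r a _ ha => rw [map_smul]; exact Submodule.smul_mem _ r ha
  have hbK : ∀ t, b ∈ Kt (t+1) := by
    intro t
    exact Submodule.subset_span ⟨0, Nat.succ_pos t, by simp⟩
  have hudK : ∀ j, u j ∈ Kt (j+1) ∧ d j ∈ Kt (j+1) := by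
    intro j
    induction j with
    | zero => rw [hu0, hd0]; exact ⟨hbK 0, hbK 0⟩
    | succ j ih =>
      have hu' : u (j+1) ∈ Kt (j+2) := by
        rw [hu j]
        exact sub_mem (hKmono (Nat.le_succ _) ih.1)
          (Submodule.smul_mem _ _ (hKS (j+1) _ ih.2))
      exact ⟨hu', by rw [hd j]; exact add_mem hu' (Submodule.smul_mem _ _ (hKmono (Nat.le_succ _) ih.2))⟩
  have hgK : ∀ j, g j ∈ Kt j := by
    intro j
    induction j with
    | zero => rw [hg0]; exact zero_mem _
    | succ j ih =>
      rw [hg j]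
      exact add_mem (hKmono (Nat.le_succ _) ih) (Submodule.smul_mem _ _ (hudK j).2)
  -- the goal Krylov space equals Kt m
  have hKeq : Submodule.span ℝ (Set.range fun i : Fin m => (S ^ (i : ℕ)) b) = Kt m := by
    rw [hKt]
    congr 1
    ext x
    constructor
    · rintro ⟨i, rfl⟩; exact ⟨(i : ℕ), i.isLt, rfl⟩
    · rintro ⟨i, hi, rfl⟩; exact ⟨⟨i, hi⟩, rfl⟩
  -- span of directions
  set Dt : ℕ → Submodule ℝ H := fun t => Submodule.span ℝ ((fun i : ℕ => d i) '' Set.Iio t) with hDt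
  have hDmono : ∀ {s t : ℕ}, s ≤ t → Dt s ≤ Dt t := by
    intro s t hst
    exact Submodule.span_mono (Set.image_mono (fun x hx => lt_of_lt_of_le hx hst))
  have hdD : ∀ k t, k < t → d k ∈ Dt t := fun k t hk => Submodule.subset_span ⟨k, hk, rfl⟩
  have huD : ∀ k, u k ∈ Dt (k+1) := by
    intro k
    rw [hu_d k]
    exact sub_mem (hdD k _ (Nat.lt_succ_self k))
      (Submodule.smul_mem _ _ (hdD (k-1) _ (Nat.lt_succ_of_le (Nat.sub_le k 1))))
  have hSdD : ∀ k < m, S (d k) ∈ Dt (k+2) := by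
    intro k hk
    rw [hSd k hk]
    exact Submodule.smul_mem _ _ (sub_mem (hDmono (Nat.le_succ _) (huD k)) (huD (k+1)))
  have hDS : ∀ t ≤ m, ∀ x ∈ Dt t, S x ∈ Dt (t+1) := by
    intro t ht x hx
    induction hx using Submodule.span_induction with
    | mem z hz =>
      obtain ⟨k, hk, rfl⟩ := hz
      have hk' : k < t := hk
      have hkm : k < m := lt_of_lt_of_le hk' ht
      exact hDmono (by omega : k + 2 ≤ t + 1) (hSdD k hkm)
    | zero => simp
    | add a c _ _ ha hc => rw [map_add]; exact add_mem ha hc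
    | smul r a _ ha => rw [map_smul]; exact Submodule.smul_mem _ r ha
  have hpowD : ∀ i < m, (S ^ i) b ∈ Dt (i+1) := by
    intro i
    induction i with
    | zero =>
      intro h0
      have : (S ^ 0) b = d 0 := by simp [hd0]
      rw [this]; exact hdD 0 1 Nat.one_pos
    | succ i ih =>
      intro hi
      have hi' : i < m := Nat.lt_of_succ_lt hi
      have hstep : (S ^ (i+1)) b = S ((S ^ i) b) := by rw [pow_succ']; rfl
      rw [hstep]
      exact hDS (i+1) (le_of_lt hi) ((S ^ i) b) (ih hi')
  have hKD : Kt m ≤ Dt m := by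
    rw [hKt, hDt]
    apply Submodule.span_le.mpr
    rintro x ⟨i, hi, rfl⟩
    exact hDmono (Nat.succ_le_of_lt hi) (hpowD i hi)
  -- orthogonality of u m to Dt m
  have horth : ∀ x ∈ Dt m, ⟪u m, x⟫ = 0 := by
    intro x hx
    induction hx using Submodule.span_induction with
    | mem z hz =>
      obtain ⟨i, hi, rfl⟩ := hz
      exact (key m le_rfl).1 i hi
    | zero => exact inner_zero_right _
    | add a c _ _ ha hc => rw [inner_add_right, ha, hc]; ring
    | smul r a _ ha => rw [real_inner_smul_right, ha]; ring
  -- conclusion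
  rw [hKeq]
  refine ⟨hgK m, ?_⟩
  intro h hh
  have hgm : g m ∈ Dt m := hKD (hgK m)
  have hhD : h ∈ Dt m := hKD hh
  have hzero : ⟪u m, g m - h⟫ = 0 := horth _ (sub_mem hgm hhD)
  have hdecomp : y - T h = (y - T (g m)) + T (g m - h) := by
    rw [map_sub]; abel
  have hmid : ⟪y - T (g m), T (g m - h)⟫ = 0 := by
    rw [← adjoint_inner_left]
    have : adjoint T (y - T (g m)) = u m := by
      rw [map_sub, ← hb, hres m, hS]; rfl
    rw [this]
    exact hzero
  have hsq : ‖y - T h‖ ^ 2 = ‖y - T (g m)‖ ^ 2 + ‖T (g m - h)‖ ^ 2 := by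
    rw [hdecomp, @norm_add_sq_real, hmid]
    ring
  nlinarith [norm_nonneg (y - T h), norm_nonneg (y - T (g m)), sq_nonneg (‖T (g m - h)‖)]
end

section
/- In the perturbation setup, the operator norm of R − R̄ (from Euclidean ℝ^m to H) satisfies ‖R − R̄‖ ≤ √m ε + m ε ‖R‖; consequently ‖R − R̄‖ ≤ 2 m ε Δ^{1/2}. -/
open scoped RealInnerProductSpace
open ContinuousLinearMap

/-- In the perturbation setup, `‖R − R̄‖ ≤ √m ε + m ε ‖R‖`, and consequently
`‖R − R̄‖ ≤ 2 m ε Δ^{1/2}` where `Δ = max(‖M'‖, 1/m)` and `M' = R* R`. -/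
theorem stmt13
    {H : Type*} [NormedAddCommGroup H] [InnerProductSpace ℝ H] [CompleteSpace H]
    (S S' : H →L[ℝ] H)
    (hSsa : IsSelfAdjoint S) (hS'sa : IsSelfAdjoint S')
    (hSpos : ∀ x, 0 ≤ ⟪S x, x⟫) (hS'pos : ∀ x, 0 ≤ ⟪S' x, x⟫)
    (hSnorm : ‖S‖ ≤ 1) (hS'norm : ‖S'‖ ≤ 1)
    (b b' : H) (ε : ℝ) (hε : 0 < ε)
    (hSd : ‖S - S'‖ ≤ ε) (hbd : ‖b - b'‖ ≤ ε)
    (m : ℕ) (hm : 1 ≤ m)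
    (R R' : EuclideanSpace ℝ (Fin m) →L[ℝ] H)
    (hR : ∀ v, R v = ∑ i : Fin m, v i • (S ^ (i : ℕ)) b)
    (hR' : ∀ v, R' v = ∑ i : Fin m, v i • (S' ^ (i : ℕ)) b')
    (M' : EuclideanSpace ℝ (Fin m) →L[ℝ] EuclideanSpace ℝ (Fin m))
    (hM' : M' = (adjoint R) ∘L R)
    (Δ : ℝ) (hΔ : Δ = max ‖M'‖ (1 / (m : ℝ))) :
    ‖R - R'‖ ≤ Real.sqrt m * ε + m * ε * ‖R‖ ∧
      ‖R - R'‖ ≤ 2 * m * ε * Real.sqrt Δ := by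
  have hm0 : (0:ℝ) < m := by exact_mod_cast hm
  -- powers of S' are contractions
  have hpow : ∀ (k : ℕ) (x : H), ‖(S' ^ k) x‖ ≤ ‖x‖ := by
    intro k
    induction k with
    | zero => intro x; simp
    | succ n ih =>
      intro x
      rw [pow_succ', ContinuousLinearMap.mul_apply]
      calc ‖S' ((S' ^ n) x)‖ ≤ ‖S'‖ * ‖(S' ^ n) x‖ := le_opNorm _ _
        _ ≤ 1 * ‖x‖ := mul_le_mul hS'norm (ih x) (norm_nonneg _) zero_le_one
        _ = ‖x‖ := one_mul _
  -- telescoping identity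
  have tel : ∀ i : ℕ, (S ^ i) b - (S' ^ i) b
      = ∑ t ∈ Finset.range i, (S' ^ (i - 1 - t)) ((S - S') ((S ^ t) b)) := by
    intro i
    induction i with
    | zero => simp
    | succ n ih =>
      rw [Finset.sum_range_succ]
      have h1 : ∀ t ∈ Finset.range n, (S' ^ (n + 1 - 1 - t)) ((S - S') ((S ^ t) b))
          = S' ((S' ^ (n - 1 - t)) ((S - S') ((S ^ t) b))) := by
        intro t ht
        rw [Finset.mem_range] at ht
        rw [show n + 1 - 1 - t = (n - 1 - t) + 1 by omega, pow_succ', ContinuousLinearMap.mul_apply]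
      rw [Finset.sum_congr rfl h1, ← map_sum, ← ih]
      simp only [Nat.add_sub_cancel, Nat.sub_self, pow_zero, ContinuousLinearMap.one_apply, pow_succ', ContinuousLinearMap.mul_apply,
        sub_apply, map_sub]
      abel
  -- ‖S^j b‖ ≤ ‖R‖
  have hSb : ∀ j : ℕ, j < m → ‖(S ^ j) b‖ ≤ ‖R‖ := by
    intro j hj
    have h1 : R (EuclideanSpace.single ⟨j, hj⟩ 1) = (S ^ j) b := by
      rw [hR]
      rw [Finset.sum_eq_single (⟨j, hj⟩ : Fin m)]
      · simp
      · intro i _ hne; simp [EuclideanSpace.single_apply, hne]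
      · simp
    calc ‖(S ^ j) b‖ = ‖R (EuclideanSpace.single (⟨j, hj⟩ : Fin m) 1)‖ := by rw [h1]
      _ ≤ ‖R‖ * ‖EuclideanSpace.single (⟨j, hj⟩ : Fin m) (1:ℝ)‖ := le_opNorm _ _
      _ = ‖R‖ := by rw [EuclideanSpace.norm_single]; simp
  -- the main pointwise bound
  have key : ∀ v : EuclideanSpace ℝ (Fin m),
      ‖(R - R') v‖ ≤ (Real.sqrt m * ε + m * ε * ‖R‖) * ‖v‖ := by
    intro v
    set V : ℕ → ℝ := fun n => if h : n < m then v ⟨n, h⟩ else 0 with hV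
    have hVfin : ∀ i : Fin m, V i = v i := by
      intro i; simp [hV, i.isLt]
    have hVz : ∀ n, ¬ n < m → V n = 0 := by
      intro n hn; simp [hV, hn]
    set w : ℕ → EuclideanSpace ℝ (Fin m) := fun k => WithLp.toLp 2 (fun j : Fin m => V (j + k + 1)) with hw
    have hnormv : ∀ u : EuclideanSpace ℝ (Fin m), ‖u‖ = Real.sqrt (∑ i, (u i)^2) := by
      intro u
      rw [EuclideanSpace.norm_eq]
      congr 1
      exact Finset.sum_congr rfl fun i _ => by rw [Real.norm_eq_abs, sq_abs]
    -- ‖w k‖ ≤ ‖v‖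
    have hwle : ∀ k : ℕ, ‖w k‖ ≤ ‖v‖ := by
      intro k
      rw [hnormv, hnormv]
      apply Real.sqrt_le_sqrt
      have e1 : ∑ j : Fin m, (w k j)^2 = ∑ j ∈ Finset.range m, (V (j+k+1))^2 :=
        Fin.sum_univ_eq_sum_range (fun j => (V (j+k+1))^2) m
      have e2 : ∑ i : Fin m, (v i)^2 = ∑ n ∈ Finset.range m, (V n)^2 := by
        rw [← Fin.sum_univ_eq_sum_range (fun n => (V n)^2) m]
        exact Finset.sum_congr rfl fun i _ => by rw [hVfin]
      rw [show (∑ j : Fin m, (w k j)^2) = ∑ j ∈ Finset.range m, (V (j+k+1))^2 from e1, e2]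
      calc ∑ j ∈ Finset.range m, (V (j+k+1))^2
          = ∑ n ∈ Finset.Ico (k+1) (m+(k+1)), (V n)^2 := by
            rw [Finset.sum_Ico_eq_sum_range, show m+(k+1)-(k+1) = m by omega]
            exact Finset.sum_congr rfl fun j _ => by rw [show (k+1)+j = j+k+1 by omega]
        _ = ∑ n ∈ Finset.Ico (k+1) m, (V n)^2 := by
            refine (Finset.sum_subset (Finset.Ico_subset_Ico_right (by omega)) ?_).symm
            intro x hx hnx
            rw [Finset.mem_Ico] at hx
            rw [Finset.mem_Ico] at hnx
            have : ¬ x < m := by omega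
            rw [hVz x this]; ring
        _ ≤ ∑ n ∈ Finset.range m, (V n)^2 := by
            apply Finset.sum_le_sum_of_subset_of_nonneg
            · intro x hx; rw [Finset.mem_Ico] at hx; rw [Finset.mem_range]; omega
            · intro n _ _; positivity
    -- ℓ¹–ℓ² bound
    have hl1 : ∑ i : Fin m, |v i| ≤ Real.sqrt m * ‖v‖ := by
      have h := Real.sum_mul_le_sqrt_mul_sqrt (Finset.univ : Finset (Fin m))
        (fun _ => (1:ℝ)) (fun i => |v i|)
      simp only [one_mul, one_pow, sq_abs, Finset.sum_const, Finset.card_univ,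
        Fintype.card_fin, nsmul_eq_mul, mul_one] at h
      rw [hnormv]
      exact h
    -- splitting
    have hsplit : (R - R') v = (∑ i : Fin m, v i • (S' ^ (i:ℕ)) (b - b'))
        + ∑ i : Fin m, v i • ((S ^ (i:ℕ)) b - (S' ^ (i:ℕ)) b) := by
      rw [sub_apply, hR, hR', ← Finset.sum_add_distrib, ← Finset.sum_sub_distrib]
      refine Finset.sum_congr rfl fun i _ => ?_
      simp only [map_sub, smul_sub]
      abel
    -- bound on the first sum
    have hA : ‖∑ i : Fin m, v i • (S' ^ (i:ℕ)) (b - b')‖ ≤ Real.sqrt m * ‖v‖ * ε := by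
      calc ‖∑ i : Fin m, v i • (S' ^ (i:ℕ)) (b - b')‖
          ≤ ∑ i : Fin m, ‖v i • (S' ^ (i:ℕ)) (b - b')‖ := norm_sum_le _ _
        _ = ∑ i : Fin m, |v i| * ‖(S' ^ (i:ℕ)) (b - b')‖ := by
            simp [norm_smul, Real.norm_eq_abs]
        _ ≤ ∑ i : Fin m, |v i| * ε := Finset.sum_le_sum fun i _ =>
            mul_le_mul_of_nonneg_left ((hpow _ _).trans hbd) (abs_nonneg _)
        _ = (∑ i : Fin m, |v i|) * ε := (Finset.sum_mul _ _ _).symm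
        _ ≤ Real.sqrt m * ‖v‖ * ε := mul_le_mul_of_nonneg_right hl1 hε.le
    -- R applied to the shifted vector
    have hRw : ∀ k : ℕ, R (w k) = ∑ j ∈ Finset.range m, V (j + k + 1) • (S ^ j) b := by
      intro k
      rw [hR, ← Fin.sum_univ_eq_sum_range (fun j => V (j + k + 1) • (S ^ j) b) m]
    -- the rearrangement identity
    have hBid : (∑ i : Fin m, v i • ((S ^ (i:ℕ)) b - (S' ^ (i:ℕ)) b))
        = ∑ k ∈ Finset.range m, (S' ^ k) ((S - S') (R (w k))) := by
      calc (∑ i : Fin m, v i • ((S ^ (i:ℕ)) b - (S' ^ (i:ℕ)) b))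
          = ∑ i ∈ Finset.range m, V i • ((S ^ i) b - (S' ^ i) b) := by
            rw [← Fin.sum_univ_eq_sum_range (fun i => V i • ((S ^ i) b - (S' ^ i) b)) m]
            exact Finset.sum_congr rfl fun i _ => by rw [hVfin]
        _ = ∑ i ∈ Finset.range m, ∑ t ∈ Finset.range i,
              V i • (S' ^ (i-1-t)) ((S - S') ((S ^ t) b)) := by
            exact Finset.sum_congr rfl fun i _ => by rw [tel i, Finset.smul_sum]
        _ = ∑ i ∈ Finset.range m, ∑ t ∈ Finset.range m,
              if t < i then V i • (S' ^ (i-1-t)) ((S - S') ((S ^ t) b)) else 0 := by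
            refine Finset.sum_congr rfl fun i hi => ?_
            rw [Finset.mem_range] at hi
            have hfil : (Finset.range m).filter (fun t => t < i) = Finset.range i := by
              ext t; simp only [Finset.mem_filter, Finset.mem_range]; omega
            rw [← hfil, Finset.sum_filter]
        _ = ∑ t ∈ Finset.range m, ∑ i ∈ Finset.range m,
              if t < i then V i • (S' ^ (i-1-t)) ((S - S') ((S ^ t) b)) else 0 :=
            Finset.sum_comm
        _ = ∑ t ∈ Finset.range m, ∑ k ∈ Finset.range m,
              V (k+t+1) • (S' ^ k) ((S - S') ((S ^ t) b)) := by
            refine Finset.sum_congr rfl fun t _ => ?_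
            have h2 : (Finset.range m).filter (fun i => t < i) = Finset.Ico (t+1) m := by
              ext i; simp only [Finset.mem_filter, Finset.mem_range, Finset.mem_Ico]; omega
            rw [← Finset.sum_filter, h2, Finset.sum_Ico_eq_sum_range]
            have h3 : ∀ k, V (t+1+k) • (S' ^ (t+1+k-1-t)) ((S - S') ((S ^ t) b))
                = V (k+t+1) • (S' ^ k) ((S - S') ((S ^ t) b)) := by
              intro k
              rw [show t+1+k = k+t+1 by omega, show k+t+1-1-t = k by omega]
            rw [Finset.sum_congr rfl fun k _ => h3 k]
            apply Finset.sum_subset (Finset.range_subset_range.2 (by omega))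
            intro k hk hnk
            rw [Finset.mem_range] at hk hnk
            rw [hVz (k+t+1) (by omega), zero_smul]
        _ = ∑ k ∈ Finset.range m, ∑ t ∈ Finset.range m,
              V (k+t+1) • (S' ^ k) ((S - S') ((S ^ t) b)) := Finset.sum_comm
        _ = ∑ k ∈ Finset.range m, (S' ^ k) ((S - S') (R (w k))) := by
            refine Finset.sum_congr rfl fun k _ => ?_
            rw [hRw k, map_sum, map_sum]
            refine Finset.sum_congr rfl fun t _ => ?_
            rw [map_smul, map_smul, show t+k+1 = k+t+1 by omega]
    -- bound on the second sum
    have hB : ‖∑ i : Fin m, v i • ((S ^ (i:ℕ)) b - (S' ^ (i:ℕ)) b)‖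
        ≤ m * (ε * (‖R‖ * ‖v‖)) := by
      rw [hBid]
      calc ‖∑ k ∈ Finset.range m, (S' ^ k) ((S - S') (R (w k)))‖
          ≤ ∑ k ∈ Finset.range m, ‖(S' ^ k) ((S - S') (R (w k)))‖ := norm_sum_le _ _
        _ ≤ ∑ k ∈ Finset.range m, ε * (‖R‖ * ‖v‖) := by
            refine Finset.sum_le_sum fun k _ => ?_
            calc ‖(S' ^ k) ((S - S') (R (w k)))‖ ≤ ‖(S - S') (R (w k))‖ := hpow _ _
              _ ≤ ‖S - S'‖ * ‖R (w k)‖ := le_opNorm _ _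
              _ ≤ ε * (‖R‖ * ‖v‖) := by
                  apply mul_le_mul hSd ?_ (norm_nonneg _) hε.le
                  exact (le_opNorm R (w k)).trans
                    (mul_le_mul_of_nonneg_left (hwle k) (norm_nonneg R))
        _ = m * (ε * (‖R‖ * ‖v‖)) := by
            rw [Finset.sum_const, Finset.card_range, nsmul_eq_mul]
    calc ‖(R - R') v‖ ≤ Real.sqrt m * ‖v‖ * ε + m * (ε * (‖R‖ * ‖v‖)) := by
          rw [hsplit]; exact (norm_add_le _ _).trans (add_le_add hA hB)
      _ = (Real.sqrt m * ε + m * ε * ‖R‖) * ‖v‖ := by ring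
  have h1 : ‖R - R'‖ ≤ Real.sqrt m * ε + m * ε * ‖R‖ := by
    apply opNorm_le_bound _ ?_ key
    positivity
  refine ⟨h1, ?_⟩
  -- ‖R‖ ≤ √Δ
  have hΔnn : (0:ℝ) ≤ Δ := by
    rw [hΔ]; exact le_trans (by positivity) (le_max_right _ _)
  have hRΔ : ‖R‖ ≤ Real.sqrt Δ := by
    have h2 : ‖R‖ ^ 2 ≤ Δ := by
      have : ‖M'‖ = ‖R‖ * ‖R‖ := by rw [hM']; exact norm_adjoint_comp_self R
      rw [hΔ, sq, ← this]; exact le_max_left _ _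
    calc ‖R‖ = Real.sqrt (‖R‖ ^ 2) := (Real.sqrt_sq (norm_nonneg R)).symm
      _ ≤ Real.sqrt Δ := Real.sqrt_le_sqrt h2
  have hsm : Real.sqrt m ≤ m * Real.sqrt Δ := by
    have h3 : Real.sqrt (1/(m:ℝ)) ≤ Real.sqrt Δ := Real.sqrt_le_sqrt (hΔ ▸ le_max_right _ _)
    have h4 : Real.sqrt (1/(m:ℝ)) = 1 / Real.sqrt m := by
      rw [one_div, one_div, Real.sqrt_inv]
    have h5 : Real.sqrt m * Real.sqrt m = m := Real.mul_self_sqrt hm0.le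
    have hsm0 : 0 < Real.sqrt m := Real.sqrt_pos.2 hm0
    rw [h4] at h3
    calc Real.sqrt m = m * (1 / Real.sqrt m) := by
          rw [mul_one_div, eq_div_iff hsm0.ne']
          exact h5
      _ ≤ m * Real.sqrt Δ := mul_le_mul_of_nonneg_left h3 hm0.le
  refine h1.trans ?_
  have h6 : Real.sqrt m * ε ≤ (m * Real.sqrt Δ) * ε :=
    mul_le_mul_of_nonneg_right hsm hε.le
  have h7 : m * ε * ‖R‖ ≤ m * ε * Real.sqrt Δ :=
    mul_le_mul_of_nonneg_left hRΔ (by positivity)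
  nlinarith [h6, h7]
end

section
/- There exists an absolute constant c > 0 such that, in the perturbation setup, if additionally m ε ≤ 1 then ‖M − M̄‖ ≤ c m ε Δ. -/
open scoped RealInnerProductSpace
open ContinuousLinearMap

private lemma pow_sub_pow_eq {A : Type*} [Ring A] (x y : A) :
    ∀ n : ℕ, x ^ n - y ^ n = ∑ k ∈ Finset.range n, x ^ k * (x - y) * y ^ (n - 1 - k)
  | 0 => by simp
  | (n+1) => by
    have ih := pow_sub_pow_eq x y n
    rw [Finset.sum_range_succ']
    have h1 : ∀ k ∈ Finset.range n,
        x ^ (k+1) * (x - y) * y ^ (n + 1 - 1 - (k+1)) = x * (x ^ k * (x - y) * y ^ (n - 1 - k)) := by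
      intro k hk
      have h2 : n + 1 - 1 - (k+1) = n - 1 - k := by omega
      rw [h2, pow_succ']
      rw [mul_assoc, mul_assoc, mul_assoc]
    rw [Finset.sum_congr rfl h1, ← Finset.mul_sum, ← ih]
    have h3 : n + 1 - 1 - 0 = n := by omega
    rw [h3, pow_zero, one_mul, mul_sub, sub_mul, ← pow_succ', ← pow_succ']
    abel

private lemma pow_apply_norm_le {H : Type*} [NormedAddCommGroup H] [NormedSpace ℝ H]
    (S : H →L[ℝ] H) (hS : ‖S‖ ≤ 1) : ∀ (k : ℕ) (x : H), ‖(S ^ k) x‖ ≤ ‖x‖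
  | 0, x => by simp
  | (k+1), x => by
    rw [pow_succ, ContinuousLinearMap.mul_apply]
    calc ‖(S ^ k) (S x)‖ ≤ ‖S x‖ := pow_apply_norm_le S hS k (S x)
    _ ≤ ‖S‖ * ‖x‖ := S.le_opNorm x
    _ ≤ 1 * ‖x‖ := mul_le_mul_of_nonneg_right hS (norm_nonneg x)
    _ = ‖x‖ := one_mul _

private lemma Rdiff_bound {H : Type} [NormedAddCommGroup H] [InnerProductSpace ℝ H]
    (S S' : H →L[ℝ] H) (hS1 : ‖S‖ ≤ 1) (hS'1 : ‖S'‖ ≤ 1)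
    (b b' : H) (ε : ℝ) (hε : 0 < ε) (hSS : ‖S - S'‖ ≤ ε) (hbb : ‖b - b'‖ ≤ ε)
    (m : ℕ) (R R' : EuclideanSpace ℝ (Fin m) →L[ℝ] H)
    (hR : ∀ v, R v = ∑ i : Fin m, v i • (S ^ (i : ℕ)) b)
    (hR' : ∀ v, R' v = ∑ i : Fin m, v i • (S' ^ (i : ℕ)) b') :
    ‖R' - R‖ ≤ Real.sqrt m * ε + m * ε * ‖R‖ := by
  have hε' := hε.le
  refine ContinuousLinearMap.opNorm_le_bound _ (by positivity) (fun v => ?_)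
  classical
  set u : ℕ → ℝ := fun i => if h : i < m then v ⟨i, h⟩ else 0 with hu
  have huv : ∀ i : Fin m, v i = u (i : ℕ) := fun i => by simp [hu, i.isLt]
  have hu0 : ∀ i : ℕ, m ≤ i → u i = 0 := by
    intro i hi
    rw [hu]
    simp only []
    rw [dif_neg (by omega)]
  have husq : ∑ i ∈ Finset.range m, (u i) ^ 2 = ‖v‖ ^ 2 := by
    rw [EuclideanSpace.norm_eq, Real.sq_sqrt (by positivity)]
    rw [← Fin.sum_univ_eq_sum_range (fun i => (u i) ^ 2) m]
    refine Finset.sum_congr rfl fun i _ => ?_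
    rw [← huv i, Real.norm_eq_abs, sq_abs]
  -- the splitting of (R' - R) v
  have e2 : R v = ∑ i ∈ Finset.range m, u i • (S ^ i) b := by
    rw [hR v, ← Fin.sum_univ_eq_sum_range (fun i => u i • (S ^ i) b) m]
    exact Finset.sum_congr rfl fun i _ => by rw [huv i]
  have e1 : R' v = ∑ i ∈ Finset.range m, u i • (S' ^ i) b' := by
    rw [hR' v, ← Fin.sum_univ_eq_sum_range (fun i => u i • (S' ^ i) b') m]
    exact Finset.sum_congr rfl fun i _ => by rw [huv i]
  have hsplit : (R' - R) v = (∑ i ∈ Finset.range m, u i • ((S' ^ i) (b' - b)))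
      + ∑ i ∈ Finset.range m, u i • (((S' ^ i) - (S ^ i)) b) := by
    rw [ContinuousLinearMap.sub_apply, e1, e2, ← Finset.sum_sub_distrib,
      ← Finset.sum_add_distrib]
    refine Finset.sum_congr rfl fun i _ => ?_
    rw [← smul_sub, ← smul_add]
    congr 1
    rw [map_sub, ContinuousLinearMap.sub_apply]
    abel
  -- part A
  have hA : ‖∑ i ∈ Finset.range m, u i • ((S' ^ i) (b' - b))‖ ≤ Real.sqrt m * ε * ‖v‖ := by
    have habs : ∑ i ∈ Finset.range m, |u i| ≤ Real.sqrt m * ‖v‖ := by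
      have hcs : (∑ i ∈ Finset.range m, |u i|) ^ 2 ≤ (m : ℝ) * ‖v‖ ^ 2 := by
        have h := sq_sum_le_card_mul_sum_sq (s := Finset.range m) (f := fun i => |u i|)
        simpa [Finset.card_range, sq_abs, husq] using h
      have h0 : (0:ℝ) ≤ ∑ i ∈ Finset.range m, |u i| := Finset.sum_nonneg fun i _ => abs_nonneg _
      have h := Real.sqrt_le_sqrt hcs
      rwa [Real.sqrt_sq h0, Real.sqrt_mul (Nat.cast_nonneg m), Real.sqrt_sq (norm_nonneg v)] at h
    calc ‖∑ i ∈ Finset.range m, u i • ((S' ^ i) (b' - b))‖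
        ≤ ∑ i ∈ Finset.range m, ‖u i • ((S' ^ i) (b' - b))‖ := norm_sum_le _ _
      _ ≤ ∑ i ∈ Finset.range m, |u i| * ε := by
          refine Finset.sum_le_sum fun i _ => ?_
          rw [norm_smul, Real.norm_eq_abs]
          refine mul_le_mul_of_nonneg_left ?_ (abs_nonneg _)
          calc ‖(S' ^ i) (b' - b)‖ ≤ ‖b' - b‖ := pow_apply_norm_le S' hS'1 i _
            _ = ‖b - b'‖ := norm_sub_rev _ _
            _ ≤ ε := hbb
      _ = (∑ i ∈ Finset.range m, |u i|) * ε := by rw [Finset.sum_mul]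
      _ ≤ (Real.sqrt m * ‖v‖) * ε := mul_le_mul_of_nonneg_right habs hε'
      _ = Real.sqrt m * ε * ‖v‖ := by ring
  -- shifted vectors
  set w : ℕ → EuclideanSpace ℝ (Fin m) := fun k => WithLp.toLp 2 (fun j : Fin m => u ((j : ℕ) + k + 1)) with hw
  have hwdef : ∀ (k : ℕ) (j : Fin m), w k j = u ((j : ℕ) + k + 1) := fun k j => by rw [hw]
  have hwnorm : ∀ k : ℕ, ‖w k‖ ≤ ‖v‖ := by
    intro k
    rw [EuclideanSpace.norm_eq]
    have h1 : ∑ j : Fin m, ‖w k j‖ ^ 2 = ∑ j ∈ Finset.range m, (u (j + k + 1)) ^ 2 := by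
      rw [← Fin.sum_univ_eq_sum_range (fun j => (u (j + k + 1)) ^ 2) m]
      refine Finset.sum_congr rfl fun j _ => ?_
      rw [hwdef k j, Real.norm_eq_abs, sq_abs]
    have h2 : ∑ j ∈ Finset.range m, (u (j + k + 1)) ^ 2 ≤ ∑ i ∈ Finset.range m, (u i) ^ 2 := by
      have e : ∑ i ∈ Finset.Ico (k+1) (k+1+m), (u i) ^ 2
          = ∑ j ∈ Finset.range m, (u (j + k + 1)) ^ 2 := by
        rw [Finset.sum_Ico_eq_sum_range, show k + 1 + m - (k+1) = m by omega]
        exact Finset.sum_congr rfl fun j _ => by rw [show k + 1 + j = j + k + 1 by omega]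
      rw [← e]
      have e2 : ∑ i ∈ Finset.range m, (u i) ^ 2 = ∑ i ∈ Finset.range (k+1+m), (u i) ^ 2 := by
        refine Finset.sum_subset (Finset.range_subset_range.2 (by omega)) fun i _ hi => ?_
        rw [hu0 i (le_of_not_gt fun h => hi (Finset.mem_range.2 h))]
        simp
      rw [e2]
      refine Finset.sum_le_sum_of_subset_of_nonneg ?_ fun i _ _ => sq_nonneg _
      intro i hi
      simp only [Finset.mem_Ico, Finset.mem_range] at hi ⊢
      omega
    calc Real.sqrt (∑ j : Fin m, ‖w k j‖ ^ 2) ≤ Real.sqrt (‖v‖ ^ 2) := by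
          refine Real.sqrt_le_sqrt ?_
          rw [h1, ← husq]
          exact h2
      _ = ‖v‖ := Real.sqrt_sq (norm_nonneg v)
  -- rewriting R (w k)
  have hyk : ∀ k : ℕ, R (w k) = ∑ i ∈ Finset.Ico (k+1) m, u i • (S ^ (i - 1 - k)) b := by
    intro k
    have l1 : R (w k) = ∑ j ∈ Finset.range m, u (j + k + 1) • (S ^ j) b := by
      rw [hR (w k), ← Fin.sum_univ_eq_sum_range (fun j => u (j + k + 1) • (S ^ j) b) m]
    have l2 : ∑ i ∈ Finset.Ico (k+1) m, u i • (S ^ (i - 1 - k)) b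
        = ∑ j ∈ Finset.range (m - (k+1)), u (j + k + 1) • (S ^ j) b := by
      rw [Finset.sum_Ico_eq_sum_range]
      refine Finset.sum_congr rfl fun j _ => ?_
      rw [show k + 1 + j = j + k + 1 by omega, show j + k + 1 - 1 - k = j by omega]
    have l3 : ∑ j ∈ Finset.range (m - (k+1)), u (j + k + 1) • (S ^ j) b
        = ∑ j ∈ Finset.range m, u (j + k + 1) • (S ^ j) b := by
      refine Finset.sum_subset (Finset.range_subset_range.2 (by omega)) fun j _ hj => ?_
      have hj' : m ≤ j + k + 1 := by
        simp only [Finset.mem_range, not_lt] at hj; omega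
      rw [hu0 _ hj', zero_smul]
    rw [l1, l2, l3]
  -- part X
  have hX : ‖∑ i ∈ Finset.range m, u i • (((S' ^ i) - (S ^ i)) b)‖ ≤ m * ε * ‖R‖ * ‖v‖ := by
    have t1 : ∀ i ∈ Finset.range m, u i • (((S' ^ i) - (S ^ i)) b)
        = ∑ k ∈ Finset.Ico 0 i, u i • ((S' ^ k) ((S' - S) ((S ^ (i-1-k)) b))) := by
      intro i _
      rw [pow_sub_pow_eq S' S i]
      rw [ContinuousLinearMap.sum_apply, Finset.smul_sum, Finset.range_eq_Ico]
      exact Finset.sum_congr rfl fun k _ => by simp [ContinuousLinearMap.mul_apply]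
    have hXeq : ∑ i ∈ Finset.range m, u i • (((S' ^ i) - (S ^ i)) b)
        = ∑ k ∈ Finset.range m, (S' ^ k) ((S' - S) (R (w k))) := by
      rw [Finset.sum_congr rfl t1, Finset.range_eq_Ico,
        ← Finset.sum_Ico_Ico_comm' 0 m
          (fun k i => u i • ((S' ^ k) ((S' - S) ((S ^ (i-1-k)) b))))]
      refine Finset.sum_congr rfl fun k _ => ?_
      rw [hyk k]
      simp only [map_sum, map_smul]
    rw [hXeq]
    calc ‖∑ k ∈ Finset.range m, (S' ^ k) ((S' - S) (R (w k)))‖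
        ≤ ∑ k ∈ Finset.range m, ‖(S' ^ k) ((S' - S) (R (w k)))‖ := norm_sum_le _ _
      _ ≤ ∑ _k ∈ Finset.range m, ε * (‖R‖ * ‖v‖) := by
          refine Finset.sum_le_sum fun k _ => ?_
          calc ‖(S' ^ k) ((S' - S) (R (w k)))‖
              ≤ ‖(S' - S) (R (w k))‖ := pow_apply_norm_le S' hS'1 k _
            _ ≤ ‖S' - S‖ * ‖R (w k)‖ := le_opNorm _ _
            _ ≤ ε * (‖R‖ * ‖v‖) := by
                refine mul_le_mul ?_ ?_ (norm_nonneg _) hε'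
                · rw [norm_sub_rev]; exact hSS
                · calc ‖R (w k)‖ ≤ ‖R‖ * ‖w k‖ := le_opNorm _ _
                    _ ≤ ‖R‖ * ‖v‖ := mul_le_mul_of_nonneg_left (hwnorm k) (norm_nonneg _)
      _ = m * ε * ‖R‖ * ‖v‖ := by
          rw [Finset.sum_const, Finset.card_range, nsmul_eq_mul]; ring
  calc ‖(R' - R) v‖
      = ‖(∑ i ∈ Finset.range m, u i • ((S' ^ i) (b' - b)))
        + ∑ i ∈ Finset.range m, u i • (((S' ^ i) - (S ^ i)) b)‖ := by rw [hsplit]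
    _ ≤ ‖∑ i ∈ Finset.range m, u i • ((S' ^ i) (b' - b))‖
        + ‖∑ i ∈ Finset.range m, u i • (((S' ^ i) - (S ^ i)) b)‖ := norm_add_le _ _
    _ ≤ Real.sqrt m * ε * ‖v‖ + m * ε * ‖R‖ * ‖v‖ := add_le_add hA hX
    _ = (Real.sqrt m * ε + m * ε * ‖R‖) * ‖v‖ := by ring
set_option maxHeartbeats 1000000 in
theorem stmt14' {H : Type} [NormedAddCommGroup H] [InnerProductSpace ℝ H] [CompleteSpace H]
    (S S' : H →L[ℝ] H)
    (hS1 : ‖S‖ ≤ 1) (hS'1 : ‖S'‖ ≤ 1)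
    (b b' : H) (ε : ℝ) (hε : 0 < ε) (hSS : ‖S - S'‖ ≤ ε) (hbb : ‖b - b'‖ ≤ ε)
    (m : ℕ) (hm : 1 ≤ m)
    (R R' : EuclideanSpace ℝ (Fin m) →L[ℝ] H)
    (hR : ∀ v, R v = ∑ i : Fin m, v i • (S ^ (i : ℕ)) b)
    (hR' : ∀ v, R' v = ∑ i : Fin m, v i • (S' ^ (i : ℕ)) b')
    (hmε : (m : ℝ) * ε ≤ 1)
    (hdiff : ‖R' - R‖ ≤ Real.sqrt m * ε + m * ε * ‖R‖) :
    ‖((adjoint R) ∘L (S ∘L R)) - ((adjoint R') ∘L (S' ∘L R'))‖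
      ≤ 9 * m * ε * max ‖(adjoint R) ∘L R‖ (1 / (m : ℝ)) := by
  have hε' := hε.le
  have hm0 : (0:ℝ) < m := by exact_mod_cast Nat.lt_of_lt_of_le Nat.zero_lt_one hm
  have hm1 : (1:ℝ) ≤ m := by exact_mod_cast hm
  set Δ : ℝ := max ‖(adjoint R) ∘L R‖ (1 / (m:ℝ)) with hΔ
  have hΔ0 : 0 < Δ := lt_max_of_lt_right (by positivity)
  set s : ℝ := Real.sqrt Δ with hs
  have hs0 : 0 ≤ s := Real.sqrt_nonneg _
  have hsq : s ^ 2 = Δ := Real.sq_sqrt hΔ0.le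
  have hadj : ‖adjoint R‖ = ‖R‖ := ContinuousLinearMap.adjoint.norm_map R
  have hNs : ‖R‖ ≤ s := by
    have h1 : ‖R‖ * ‖R‖ ≤ Δ :=
      le_trans (le_of_eq (norm_adjoint_comp_self R).symm) (le_max_left _ _)
    nlinarith [norm_nonneg R, hs0, hsq]
  have hmΔ : 1 ≤ (m:ℝ) * Δ := by
    have h := le_max_right ‖(adjoint R) ∘L R‖ (1 / (m:ℝ))
    rw [← hΔ, div_le_iff₀ hm0] at h
    linarith
  have hms : 1 ≤ Real.sqrt m * s := by
    have h := Real.sqrt_le_sqrt hmΔ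
    rwa [Real.sqrt_one, Real.sqrt_mul (Nat.cast_nonneg m), ← hs] at h
  have hmss : Real.sqrt m ≤ m * s := by
    have h2 : Real.sqrt m * 1 ≤ Real.sqrt m * (Real.sqrt m * s) :=
      mul_le_mul_of_nonneg_left hms (Real.sqrt_nonneg _)
    rwa [mul_one, ← mul_assoc, Real.mul_self_sqrt (Nat.cast_nonneg m)] at h2
  have hK : ‖R - R'‖ ≤ 2 * ((m:ℝ) * ε) * s := by
    rw [norm_sub_rev]
    have h1 : Real.sqrt m * ε ≤ (m:ℝ) * ε * s := by
      calc Real.sqrt m * ε ≤ ((m:ℝ) * s) * ε := mul_le_mul_of_nonneg_right hmss hε'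
        _ = (m:ℝ) * ε * s := by ring
    have h2 : (m:ℝ) * ε * ‖R‖ ≤ (m:ℝ) * ε * s :=
      mul_le_mul_of_nonneg_left hNs (by positivity)
    calc ‖R' - R‖ ≤ Real.sqrt m * ε + m * ε * ‖R‖ := hdiff
      _ ≤ 2 * ((m:ℝ) * ε) * s := by linarith
  have hR'n : ‖R'‖ ≤ 3 * s := by
    calc ‖R'‖ = ‖R - (R - R')‖ := by rw [sub_sub_cancel]
      _ ≤ ‖R‖ + ‖R - R'‖ := norm_sub_le _ _
      _ ≤ s + 2 * ((m:ℝ) * ε) * s := add_le_add hNs hK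
      _ ≤ s + 2 * 1 * s := by nlinarith
      _ = 3 * s := by ring
  have hid : ((adjoint R) ∘L (S ∘L R)) - ((adjoint R') ∘L (S' ∘L R'))
      = ((adjoint R) ∘L ((S - S') ∘L R)) + ((adjoint R) ∘L (S' ∘L (R - R')))
        + (((adjoint R) - (adjoint R')) ∘L (S' ∘L R')) := by
    refine ContinuousLinearMap.ext fun x => ?_
    simp only [ContinuousLinearMap.comp_apply, ContinuousLinearMap.sub_apply,
      ContinuousLinearMap.add_apply, map_sub]
    abel
  have hadjd : ‖(adjoint R) - (adjoint R')‖ = ‖R - R'‖ := by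
    calc ‖(adjoint R) - (adjoint R')‖ = ‖adjoint (R - R')‖ := by rw [map_sub]
      _ = ‖R - R'‖ := ContinuousLinearMap.adjoint.norm_map _
  have t1 : ‖(adjoint R) ∘L ((S - S') ∘L R)‖ ≤ s * (ε * s) := by
    calc ‖(adjoint R) ∘L ((S - S') ∘L R)‖
        ≤ ‖adjoint R‖ * ‖(S - S') ∘L R‖ := opNorm_comp_le _ _
      _ ≤ ‖adjoint R‖ * (‖S - S'‖ * ‖R‖) :=
          mul_le_mul_of_nonneg_left (opNorm_comp_le _ _) (norm_nonneg _)
      _ ≤ s * (ε * s) := by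
          rw [hadj]
          exact mul_le_mul hNs (mul_le_mul hSS hNs (norm_nonneg _) hε') (by positivity) hs0
  have t2 : ‖(adjoint R) ∘L (S' ∘L (R - R'))‖ ≤ s * (1 * (2 * ((m:ℝ) * ε) * s)) := by
    calc ‖(adjoint R) ∘L (S' ∘L (R - R'))‖
        ≤ ‖adjoint R‖ * ‖S' ∘L (R - R')‖ := opNorm_comp_le _ _
      _ ≤ ‖adjoint R‖ * (‖S'‖ * ‖R - R'‖) :=
          mul_le_mul_of_nonneg_left (opNorm_comp_le _ _) (norm_nonneg _)
      _ ≤ s * (1 * (2 * ((m:ℝ) * ε) * s)) := by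
          rw [hadj]
          exact mul_le_mul hNs (mul_le_mul hS'1 hK (norm_nonneg _) zero_le_one)
            (by positivity) hs0
  have t3 : ‖((adjoint R) - (adjoint R')) ∘L (S' ∘L R')‖
      ≤ (2 * ((m:ℝ) * ε) * s) * (1 * (3 * s)) := by
    calc ‖((adjoint R) - (adjoint R')) ∘L (S' ∘L R')‖
        ≤ ‖(adjoint R) - (adjoint R')‖ * ‖S' ∘L R'‖ := opNorm_comp_le _ _
      _ ≤ ‖(adjoint R) - (adjoint R')‖ * (‖S'‖ * ‖R'‖) :=
          mul_le_mul_of_nonneg_left (opNorm_comp_le _ _) (norm_nonneg _)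
      _ ≤ (2 * ((m:ℝ) * ε) * s) * (1 * (3 * s)) := by
          rw [hadjd]
          exact mul_le_mul hK (mul_le_mul hS'1 hR'n (norm_nonneg _) zero_le_one)
            (by positivity) (by positivity)
  calc ‖((adjoint R) ∘L (S ∘L R)) - ((adjoint R') ∘L (S' ∘L R'))‖
      = ‖((adjoint R) ∘L ((S - S') ∘L R)) + ((adjoint R) ∘L (S' ∘L (R - R')))
        + (((adjoint R) - (adjoint R')) ∘L (S' ∘L R'))‖ := by rw [hid]
    _ ≤ ‖(adjoint R) ∘L ((S - S') ∘L R)‖ + ‖(adjoint R) ∘L (S' ∘L (R - R'))‖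
        + ‖((adjoint R) - (adjoint R')) ∘L (S' ∘L R')‖ := norm_add₃_le
    _ ≤ s * (ε * s) + s * (1 * (2 * ((m:ℝ) * ε) * s))
        + (2 * ((m:ℝ) * ε) * s) * (1 * (3 * s)) := add_le_add (add_le_add t1 t2) t3
    _ ≤ 9 * m * ε * Δ := by
        rw [← hsq]
        nlinarith [mul_nonneg (mul_nonneg (sub_nonneg.2 hm1) hε') (sq_nonneg s)]

/-- There is an absolute constant `c > 0` such that, in the perturbation setup, if `m ε ≤ 1`
then `‖M − M̄‖ ≤ c m ε Δ`, where `M = R* S R`, `M̄ = R̄* S̄ R̄` and `Δ = max(‖R* R‖, 1/m)`. -/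
theorem stmt14 :
    ∃ c : ℝ, 0 < c ∧
      ∀ (H : Type) (_ : NormedAddCommGroup H) (_ : InnerProductSpace ℝ H) (_ : CompleteSpace H)
        (S S' : H →L[ℝ] H),
        IsSelfAdjoint S → IsSelfAdjoint S' →
        (∀ x, 0 ≤ ⟪S x, x⟫) → (∀ x, 0 ≤ ⟪S' x, x⟫) → ‖S‖ ≤ 1 → ‖S'‖ ≤ 1 →
        ∀ (b b' : H) (ε : ℝ), 0 < ε → ‖S - S'‖ ≤ ε → ‖b - b'‖ ≤ ε →
        ∀ m : ℕ, 1 ≤ m →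
        ∀ (R R' : EuclideanSpace ℝ (Fin m) →L[ℝ] H),
          (∀ v, R v = ∑ i : Fin m, v i • (S ^ (i : ℕ)) b) →
          (∀ v, R' v = ∑ i : Fin m, v i • (S' ^ (i : ℕ)) b') →
          (m : ℝ) * ε ≤ 1 →
          ‖((adjoint R) ∘L (S ∘L R)) - ((adjoint R') ∘L (S' ∘L R'))‖
            ≤ c * m * ε * max ‖(adjoint R) ∘L R‖ (1 / (m : ℝ)) := by
  refine ⟨9, by norm_num, ?_⟩
  intro H _ _ _ S S' _ _ _ _ hS1 hS'1 b b' ε hε hSS hbb m hm R R' hR hR' hmε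
  exact stmt14' S S' hS1 hS'1 b b' ε hε hSS hbb m hm R R' hR hR' hmε
    (Rdiff_bound S S' hS1 hS'1 b b' ε hε hSS hbb m R R' hR hR')
end
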